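/- arXiv:2006.01420 — 5 statements merged into one kernel-verified Lean document; each statement's English description precedes it below -/
import Mathlib

section
/- Under (A1) and (A2), for every fixed i ∈ S and φ ∈ B_W(S), the map (μ,ν) ↦ r̃(i,μ,ν) + ∑_{j∈S} q̃(j|i,μ,ν) φ(j) is continuous on P(U) × P(V) with the product of the weak convergence topologies. -/
open MeasureTheory Filter Topology

noncomputable section

variable {U V : Type}

/-- Integrated reward rate `r̃(i,μ,ν)`. -/
def rT [MeasurableSpace U] [MeasurableSpace V] (r : ℕ → U → V → ℝ) (i : ℕ)
    (μ : ProbabilityMeasure U) (ν : ProbabilityMeasure V) : ℝ :=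
  ∫ b, (∫ a, r i a b ∂(μ : Measure U)) ∂(ν : Measure V)

/-- Integrated transition rate `q̃(j|i,μ,ν)`. -/
def qT [MeasurableSpace U] [MeasurableSpace V] (q : ℕ → ℕ → U → V → ℝ) (i j : ℕ)
    (μ : ProbabilityMeasure U) (ν : ProbabilityMeasure V) : ℝ :=
  ∫ b, (∫ a, q i j a b ∂(μ : Measure U)) ∂(ν : Measure V)

/-- `p̃(j|i,μ,ν) = q̃(j|i,μ,ν)/(q(i)+1) + δ_{ij}`. -/
def pT [MeasurableSpace U] [MeasurableSpace V] (q : ℕ → ℕ → U → V → ℝ) (qb : ℕ → ℝ)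
    (i j : ℕ) (μ : ProbabilityMeasure U) (ν : ProbabilityMeasure V) : ℝ :=
  qT q i j μ ν / (qb i + 1) + (if i = j then (1 : ℝ) else 0)

/-- `H_α(i,φ)`. -/
def Hop [MeasurableSpace U] [MeasurableSpace V] (q : ℕ → ℕ → U → V → ℝ)
    (r : ℕ → U → V → ℝ) (φ : ℕ → ℝ) (i : ℕ) : ℝ :=
  ⨅ μ : ProbabilityMeasure U, ⨆ ν : ProbabilityMeasure V,
    (rT r i μ ν + ∑' j, qT q i j μ ν * φ j)

/-- `I_α(i,φ)`. -/
def Iop [MeasurableSpace U] [MeasurableSpace V] (q : ℕ → ℕ → U → V → ℝ)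
    (r : ℕ → U → V → ℝ) (qb : ℕ → ℝ) (α : ℝ) (φ : ℕ → ℝ) (i : ℕ) : ℝ :=
  ⨅ μ : ProbabilityMeasure U, ⨆ ν : ProbabilityMeasure V,
    (rT r i μ ν / (α + qb i + 1) +
      ((qb i + 1) / (α + qb i + 1)) * ∑' j, pT q qb i j μ ν * φ j)

/-- The operator `T`. -/
def Tmap [MeasurableSpace U] [MeasurableSpace V] (q : ℕ → ℕ → U → V → ℝ)
    (r : ℕ → U → V → ℝ) (qb : ℕ → ℝ) (α : ℝ) (ψ₁ ψ₂ : ℕ → ℝ)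
    (φ : ℕ → ℝ) (i : ℕ) : ℝ :=
  min (max (Iop q r qb α φ i) (ψ₂ i)) (ψ₁ i)

/-- The space `B_W(S)` of nonnegative functions with finite weighted sup-norm. -/
def BW (W : ℕ → ℝ) : Set (ℕ → ℝ) :=
  {f | (∀ i, 0 ≤ f i) ∧ BddAbove (Set.range fun i => f i / W i)}

/-- The weighted sup-norm `‖f‖_W`. -/
def normW (W : ℕ → ℝ) (f : ℕ → ℝ) : ℝ := ⨆ i, f i / W i

/-- Basic properties of the transition rates: nonnegativity off the diagonal,
conservativeness and stability (`qb i` is the least upper bound `q(i)`). -/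
structure RateHyps (q : ℕ → ℕ → U → V → ℝ) (qb : ℕ → ℝ) : Prop where
  off_nonneg : ∀ i j a b, j ≠ i → 0 ≤ q i j a b
  summable : ∀ i a b, Summable fun j => q i j a b
  conservative : ∀ i a b, ∑' j, q i j a b = 0
  stable : ∀ i, IsLUB (Set.range fun ab : U × V =>
    ∑' j, if j = i then (0 : ℝ) else q i j ab.1 ab.2) (qb i)

/-- Assumption (A1) (with `w 0, …, w (N-1)` playing the role of `w_1, …, w_N`,
and `W = w_1 + ⋯ + w_N`). -/
structure A1Hyps (q : ℕ → ℕ → U → V → ℝ) (qb : ℕ → ℝ) (N : ℕ) (w : ℕ → ℕ → ℝ)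
    (c : ℝ) (W : ℕ → ℝ) : Prop where
  N_pos : 0 < N
  c_pos : 0 < c
  w_nonneg : ∀ n i, 0 ≤ w n i
  w_summable : ∀ n, n < N → ∀ i a b, Summable fun j => q i j a b * w n j
  w_rec : ∀ n, n + 1 < N → ∀ i a b, ∑' j, q i j a b * w n j ≤ w (n + 1) i
  w_last : ∀ i a b, ∑' j, q i j a b * w (N - 1) j ≤ 0
  qb_le : ∀ i, qb i ≤ c * W i
  W_def : ∀ i, W i = ∑ n ∈ Finset.range N, w n i
  W_pos : ∀ i, 0 < W i

/-- Assumption (A2), parts (ii)-(iv) concerning `r` and `q`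
(compactness of `U` and `V` is imposed through instance arguments). -/
structure A2Hyps [TopologicalSpace U] [TopologicalSpace V] (q : ℕ → ℕ → U → V → ℝ)
    (r : ℕ → U → V → ℝ) (W : ℕ → ℝ) (M : ℝ) : Prop where
  r_nonneg : ∀ i a b, 0 ≤ r i a b
  r_cont : ∀ i, Continuous fun ab : U × V => r i ab.1 ab.2
  q_cont : ∀ i j, Continuous fun ab : U × V => q i j ab.1 ab.2
  qW_cont : ∀ i, Continuous fun ab : U × V => ∑' j, q i j ab.1 ab.2 * W j
  r_le : ∀ i a b, r i a b ≤ M * W i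

/-- Assumption (A2), part (iv) concerning the stopped pay-off functions. -/
structure PsiHyps (ψ₁ ψ₂ : ℕ → ℝ) (W : ℕ → ℝ) (M : ℝ) : Prop where
  ψ₂_nonneg : ∀ i, 0 ≤ ψ₂ i
  ψ₁_le : ∀ i, ψ₁ i ≤ M * W i
  ψ₂_lt_ψ₁ : ∀ i, ψ₂ i < ψ₁ i

end


open scoped ENNReal NNReal

section Auxiliary

open BoundedContinuousFunction

lemma myIntegrable {X : Type} [TopologicalSpace X] [CompactSpace X] [MeasurableSpace X]
    [OpensMeasurableSpace X] {f : X → ℝ} (hf : Continuous f) (μ : MeasureTheory.Measure X)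
    [MeasureTheory.IsFiniteMeasure μ] : MeasureTheory.Integrable f μ :=
  (BoundedContinuousFunction.mkOfCompact ⟨f, hf⟩).integrable μ

lemma contIter {U V : Type} [MetricSpace U] [CompactSpace U]
    [MeasurableSpace U] [BorelSpace U]
    [MetricSpace V] [CompactSpace V] [MeasurableSpace V] [BorelSpace V]
    (g : U → V → ℝ) (hg : Continuous fun z : U × V => g z.1 z.2) :
    Continuous fun p : ProbabilityMeasure U × ProbabilityMeasure V =>
      ∫ b, (∫ a, g a b ∂(p.1 : Measure U)) ∂(p.2 : Measure V) := by
  set Γ := BoundedContinuousFunction.mkOfCompact (⟨fun z : U × V => g z.1 z.2, hg⟩ : C(U × V, ℝ))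
    with hΓ
  have hgb : ∀ a b, ‖g a b‖ ≤ ‖Γ‖ := fun a b => Γ.norm_coe_le_norm (a, b)
  have hca : ∀ b, Continuous fun a => g a b :=
    fun b => hg.comp (continuous_id.prodMk continuous_const)
  set H : ProbabilityMeasure U → V → ℝ := fun μ b => ∫ a, g a b ∂(μ : Measure U) with hH
  have hHb : ∀ μ b, ‖H μ b‖ ≤ ‖Γ‖ := by
    intro μ b
    calc ‖H μ b‖ ≤ ‖Γ‖ * ((μ : Measure U) Set.univ).toReal :=
          norm_integral_le_of_norm_le_const (Eventually.of_forall fun a => hgb a b)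
      _ = ‖Γ‖ := by simp
  have hEq : Equicontinuous H := by
    intro b₀
    rw [Metric.equicontinuousAt_iff_right]
    intro ε hε
    obtain ⟨δ, hδ, hδ'⟩ := Metric.uniformContinuous_iff.mp
      (CompactSpace.uniformContinuous_of_continuous hg) (ε / 2) (half_pos hε)
    have hball : ∀ᶠ b in 𝓝 b₀, dist b b₀ < δ := Metric.ball_mem_nhds b₀ hδ
    filter_upwards [hball] with b hb μ
    have key : ∀ a, ‖g a b₀ - g a b‖ ≤ ε / 2 := by
      intro a
      have : dist ((a, b₀) : U × V) (a, b) < δ := by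
        rw [Prod.dist_eq]
        simp only [dist_self]
        exact max_lt hδ (by rw [dist_comm]; exact hb)
      exact (le_of_lt (by simpa [Real.dist_eq, abs_sub_comm] using hδ' this))
    have : dist (H μ b₀) (H μ b) ≤ ε / 2 := by
      rw [dist_eq_norm, hH]
      have : (∫ a, g a b₀ ∂(μ : Measure U)) - ∫ a, g a b ∂(μ : Measure U)
          = ∫ a, (g a b₀ - g a b) ∂(μ : Measure U) :=
        (integral_sub (myIntegrable (hca b₀) _) (myIntegrable (hca b) _)).symm
      rw [this]
      calc ‖∫ a, (g a b₀ - g a b) ∂(μ : Measure U)‖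
          ≤ (ε / 2) * ((μ : Measure U) Set.univ).toReal :=
            norm_integral_le_of_norm_le_const (Eventually.of_forall key)
        _ = ε / 2 := by simp
    linarith
  have hHcont : ∀ μ, Continuous (H μ) := fun μ => hEq.continuous μ
  rw [continuous_iff_continuousAt]
  rintro ⟨μ₀, ν₀⟩
  have hptw : Tendsto H (𝓝 μ₀) (𝓝 (H μ₀)) := by
    rw [tendsto_pi_nhds]
    intro b
    have := (ProbabilityMeasure.continuous_integral_boundedContinuousFunction
      (BoundedContinuousFunction.mkOfCompact ⟨fun a => g a b, hca b⟩)).tendsto μ₀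
    simpa using this
  have hunif : TendstoUniformly H (H μ₀) (𝓝 μ₀) := by
    have := (hEq.tendsto_uniformFun_iff_pi (𝓝 μ₀) (H μ₀)).mpr hptw
    rwa [UniformFun.tendsto_iff_tendstoUniformly] at this
  set f₀ : V →ᵇ ℝ := BoundedContinuousFunction.ofNormedAddCommGroup (H μ₀) (hHcont μ₀) ‖Γ‖
    (fun b => hHb μ₀ b) with hf₀
  have t2 : Tendsto (fun p : ProbabilityMeasure U × ProbabilityMeasure V =>
      ∫ b, H μ₀ b ∂(p.2 : Measure V)) (𝓝 (μ₀, ν₀)) (𝓝 (∫ b, H μ₀ b ∂(ν₀ : Measure V))) := by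
    have hc : Continuous fun ν : ProbabilityMeasure V => ∫ b, H μ₀ b ∂(ν : Measure V) := by
      have := ProbabilityMeasure.continuous_integral_boundedContinuousFunction f₀
      simpa [hf₀] using this
    exact (hc.comp continuous_snd).tendsto (μ₀, ν₀)
  have t1 : Tendsto (fun p : ProbabilityMeasure U × ProbabilityMeasure V =>
      ∫ b, (H p.1 b - H μ₀ b) ∂(p.2 : Measure V)) (𝓝 (μ₀, ν₀)) (𝓝 0) := by
    rw [NormedAddCommGroup.tendsto_nhds_zero]
    intro ε hε
    have h1 : ∀ᶠ μ in 𝓝 μ₀, ∀ b, dist (H μ₀ b) (H μ b) < ε / 2 :=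
      Metric.tendstoUniformly_iff.mp hunif (ε / 2) (half_pos hε)
    have h2 : ∀ᶠ p : ProbabilityMeasure U × ProbabilityMeasure V in 𝓝 (μ₀, ν₀),
        ∀ b, dist (H μ₀ b) (H p.1 b) < ε / 2 :=
      (continuous_fst.tendsto (μ₀, ν₀)).eventually h1
    filter_upwards [h2] with p hp
    calc ‖∫ b, (H p.1 b - H μ₀ b) ∂(p.2 : Measure V)‖
        ≤ (ε / 2) * ((p.2 : Measure V) Set.univ).toReal :=
          norm_integral_le_of_norm_le_const (Eventually.of_forall fun b => by
            have := hp b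
            rw [dist_comm, dist_eq_norm] at this
            exact this.le)
      _ = ε / 2 := by simp
      _ < ε := half_lt_self hε
  have key : ∀ p : ProbabilityMeasure U × ProbabilityMeasure V,
      ∫ b, H p.1 b ∂(p.2 : Measure V)
        = (∫ b, (H p.1 b - H μ₀ b) ∂(p.2 : Measure V)) + ∫ b, H μ₀ b ∂(p.2 : Measure V) := by
    intro p
    rw [integral_sub (myIntegrable (hHcont p.1) _) (myIntegrable (hHcont μ₀) _)]
    ring
  have := t1.add t2
  rw [zero_add] at this
  exact Filter.Tendsto.congr (fun p => (key p).symm) this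

end Auxiliary

/-- Continuity of `(μ,ν) ↦ r̃(i,μ,ν) + ∑_j q̃(j|i,μ,ν) φ(j)` on `P(U) × P(V)`
with the topologies of weak convergence. -/
theorem stmt8 {U V : Type} [MetricSpace U] [CompactSpace U] [Nonempty U]
    [MeasurableSpace U] [BorelSpace U]
    [MetricSpace V] [CompactSpace V] [Nonempty V]
    [MeasurableSpace V] [BorelSpace V]
    (q : ℕ → ℕ → U → V → ℝ) (r : ℕ → U → V → ℝ) (qb : ℕ → ℝ)
    (N : ℕ) (w : ℕ → ℕ → ℝ) (c : ℝ) (W : ℕ → ℝ) (M : ℝ)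
    (hrate : RateHyps q qb) (hA1 : A1Hyps q qb N w c W)
    (hA2 : A2Hyps q r W M) :
    ∀ φ ∈ BW W, ∀ i : ℕ,
      Continuous fun p : ProbabilityMeasure U × ProbabilityMeasure V =>
        rT r i p.1 p.2 + ∑' j, qT q i j p.1 p.2 * φ j := by
  classical
  rintro φ ⟨hφ0, hφbdd⟩ i
  obtain ⟨N', rfl⟩ : ∃ N', N = N' + 1 := ⟨N - 1, by have := hA1.N_pos; omega⟩
  set K : ℝ := ⨆ j, φ j / W j with hK
  have hφle : ∀ j, φ j ≤ K * W j := by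
    intro j
    have h1 : φ j / W j ≤ K := le_ciSup hφbdd j
    calc φ j = φ j / W j * W j := (div_mul_cancel₀ _ (hA1.W_pos j).ne').symm
      _ ≤ K * W j := mul_le_mul_of_nonneg_right h1 (hA1.W_pos j).le
  have hKnn : 0 ≤ K :=
    le_trans (div_nonneg (hφ0 0) (hA1.W_pos 0).le) (le_ciSup hφbdd 0)
  -- summability of q ⬝ W
  have hsumqW : ∀ a b, Summable fun j => q i j a b * W j := by
    intro a b
    have h := summable_sum (s := Finset.range (N' + 1)) (f := fun n j => q i j a b * w n j)
      (fun n hn => hA1.w_summable n (Finset.mem_range.mp hn) i a b)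
    exact h.congr fun j => by rw [hA1.W_def j, Finset.mul_sum]
  have hoffd : ∀ j a b, j ≠ i → 0 ≤ q i j a b := fun j a b h => hrate.off_nonneg i j a b h
  have hsumvW : ∀ a b, Summable fun j => if j = i then 0 else q i j a b * W j := by
    intro a b
    exact ((hsumqW a b).update i 0).congr fun j => (Function.update_apply _ i 0 j)
  -- tsum of q ⬝ W is at most W i  (assumption (A1))
  have htsumqW : ∀ a b, ∑' j, q i j a b * W j ≤ W i := by
    intro a b
    have h1 : ∑' j, q i j a b * W j
        = ∑ n ∈ Finset.range (N' + 1), ∑' j, q i j a b * w n j := by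
      rw [← Summable.tsum_finsetSum (fun n hn => hA1.w_summable n (Finset.mem_range.mp hn) i a b)]
      exact tsum_congr fun j => by rw [hA1.W_def j, Finset.mul_sum]
    rw [h1]
    have h2 : ∑ n ∈ Finset.range (N' + 1), ∑' j, q i j a b * w n j
        ≤ ∑ n ∈ Finset.range (N' + 1), (if n < N' then w (n + 1) i else 0) := by
      apply Finset.sum_le_sum
      intro n hn
      by_cases h : n < N'
      · simpa [h] using hA1.w_rec n (by omega) i a b
      · have hn' : n = N' := by have := Finset.mem_range.mp hn; omega
        subst hn'
        simpa [h, Nat.add_sub_cancel] using hA1.w_last i a b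
    have h3 : ∑ n ∈ Finset.range (N' + 1), (if n < N' then w (n + 1) i else 0)
        = ∑ n ∈ Finset.range N', w (n + 1) i := by
      rw [Finset.sum_range_succ, if_neg (lt_irrefl N'), add_zero]
      exact Finset.sum_congr rfl fun n hn => if_pos (Finset.mem_range.mp hn)
    have h4 : ∑ n ∈ Finset.range N', w (n + 1) i ≤ W i := by
      rw [hA1.W_def, Finset.sum_range_succ']
      exact le_add_of_nonneg_right (hA1.w_nonneg 0 i)
    linarith
  -- -q(i|i,a,b) ≤ qb i
  have hdiag : ∀ a b, -q i i a b ≤ qb i := by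
    intro a b
    have h0 : Summable fun j => q i j a b := hrate.summable i a b
    have h1 := Summable.tsum_eq_add_tsum_ite h0 i
    rw [hrate.conservative i a b] at h1
    have h2 : (∑' j, if j = i then (0:ℝ) else q i j a b) ≤ qb i :=
      (hrate.stable i).1 ⟨(a, b), rfl⟩
    linarith
  have hvW_eq : ∀ a b, ∑' j, (if j = i then 0 else q i j a b * W j)
      = (∑' j, q i j a b * W j) - q i i a b * W i := by
    intro a b
    have := Summable.tsum_eq_add_tsum_ite (hsumqW a b) i
    linarith
  have hvW_le : ∀ a b, ∑' j, (if j = i then 0 else q i j a b * W j) ≤ (1 + qb i) * W i := by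
    intro a b
    rw [hvW_eq a b]
    have h2 : -(q i i a b * W i) ≤ qb i * W i := by
      rw [← neg_mul]
      exact mul_le_mul_of_nonneg_right (hdiag a b) (hA1.W_pos i).le
    have h3 := htsumqW a b
    nlinarith
  -- pointwise bounds for the off-diagonal summands
  have hptnn : ∀ a b j, 0 ≤ (if j = i then 0 else q i j a b * φ j) := by
    intro a b j
    by_cases h : j = i
    · simp [h]
    · simpa [h] using mul_nonneg (hoffd j a b h) (hφ0 j)
  have hptle : ∀ a b j, (if j = i then 0 else q i j a b * φ j)
      ≤ K * (if j = i then 0 else q i j a b * W j) := by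
    intro a b j
    by_cases h : j = i
    · simp [h]
    · simp only [h, if_false]
      calc q i j a b * φ j ≤ q i j a b * (K * W j) :=
            mul_le_mul_of_nonneg_left (hφle j) (hoffd j a b h)
        _ = K * (q i j a b * W j) := by ring
  have hsumu : ∀ a b, Summable fun j => if j = i then 0 else q i j a b * φ j := by
    intro a b
    exact Summable.of_nonneg_of_le (hptnn a b) (hptle a b) ((hsumvW a b).mul_left K)
  have hsumqφ : ∀ a b, Summable fun j => q i j a b * φ j := by
    intro a b
    have h1 : Summable fun j => if j = i then q i i a b * φ i else (0:ℝ) :=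
      ((summable_zero : Summable fun _ : ℕ => (0:ℝ)).update i (q i i a b * φ i)).congr
        fun j => (Function.update_apply _ i _ j)
    exact (h1.add (hsumu a b)).congr fun j => by by_cases h : j = i <;> simp [h]
  have hqφ_eq : ∀ a b, ∑' j, q i j a b * φ j
      = q i i a b * φ i + ∑' j, (if j = i then 0 else q i j a b * φ j) :=
    fun a b => Summable.tsum_eq_add_tsum_ite (hsumqφ a b) i
  have htsumu_le : ∀ a b, ∑' j, (if j = i then 0 else q i j a b * φ j)
      ≤ K * ((1 + qb i) * W i) := by
    intro a b
    calc ∑' j, (if j = i then 0 else q i j a b * φ j)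
        ≤ ∑' j, K * (if j = i then 0 else q i j a b * W j) :=
          Summable.tsum_le_tsum (hptle a b) (hsumu a b) ((hsumvW a b).mul_left K)
      _ = K * ∑' j, (if j = i then 0 else q i j a b * W j) := tsum_mul_left
      _ ≤ K * ((1 + qb i) * W i) := mul_le_mul_of_nonneg_left (hvW_le a b) hKnn
  -- continuity of the off-diagonal series
  have huucont : ∀ j, Continuous fun z : U × V => (if j = i then 0 else q i j z.1 z.2 * φ j) := by
    intro j
    by_cases h : j = i
    · simpa [h] using continuous_const
    · simp only [h, if_false]
      exact (hA2.q_cont i j).mul continuous_const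
  have hFcont : Continuous fun z : U × V =>
      ∑' j, (if j = i then 0 else q i j z.1 z.2 * φ j) := by
    set F : U × V → ℝ := fun z => ∑' j, (if j = i then 0 else q i j z.1 z.2 * φ j) with hF
    set vv : ℕ → U × V → ℝ := fun j z => K * (if j = i then 0 else q i j z.1 z.2 * W j) with hvv
    have hvvcont : ∀ j, Continuous (vv j) := by
      intro j
      by_cases h : j = i
      · simpa [hvv, h] using (continuous_const : Continuous fun _ : U × V => (0:ℝ))
      · simp only [hvv, h, if_false]
        exact (continuous_const.mul ((hA2.q_cont i j).mul continuous_const) :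
            Continuous fun z : U × V => K * (q i j z.1 z.2 * W j))
    have hsumvv : ∀ z : U × V, Summable fun j => vv j z :=
      fun z => (hsumvW z.1 z.2).mul_left K
    set C : U × V → ℝ := fun z => K * ((∑' j, q i j z.1 z.2 * W j) - q i i z.1 z.2 * W i) with hC
    have hCeq : ∀ z, C z = ∑' j, vv j z := by
      intro z
      simp only [hC, hvv]
      rw [tsum_mul_left, hvW_eq z.1 z.2]
    have hCcont : Continuous C :=
      continuous_const.mul ((hA2.qW_cont i).sub ((hA2.q_cont i i).mul continuous_const))
    have htailF : ∀ (n : ℕ) (z : U × V),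
        F z - ∑ j ∈ Finset.range n, (if j = i then 0 else q i j z.1 z.2 * φ j)
          ≤ C z - ∑ j ∈ Finset.range n, vv j z := by
      intro n z
      have h1 := Summable.sum_add_tsum_compl (s := Finset.range n) (hsumu z.1 z.2)
      have h2 := Summable.sum_add_tsum_compl (s := Finset.range n) (hsumvv z)
      rw [hCeq z]
      have h3 : ∑' (j : ↥(((Finset.range n : Finset ℕ) : Set ℕ)ᶜ)),
            (if (j : ℕ) = i then 0 else q i (j : ℕ) z.1 z.2 * φ (j : ℕ))
          ≤ ∑' (j : ↥(((Finset.range n : Finset ℕ) : Set ℕ)ᶜ)), vv (j : ℕ) z :=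
        Summable.tsum_le_tsum (fun j => hptle z.1 z.2 (j : ℕ))
          ((hsumu z.1 z.2).subtype _) ((hsumvv z).subtype _)
      linarith
    have hFtail0 : ∀ (n : ℕ) (z : U × V),
        0 ≤ F z - ∑ j ∈ Finset.range n, (if j = i then 0 else q i j z.1 z.2 * φ j) := by
      intro n z
      have := Summable.sum_le_tsum (Finset.range n) (fun j _ => hptnn z.1 z.2 j) (hsumu z.1 z.2)
      simp only [hF]
      linarith
    rw [continuous_iff_continuousAt]
    intro z₀
    have : Tendsto F (𝓝 z₀) (𝓝 (F z₀)) := by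
      rw [Metric.tendsto_nhds]
      intro ε hε
      have hpart : Tendsto (fun n => ∑ j ∈ Finset.range n, vv j z₀) atTop (𝓝 (C z₀)) := by
        rw [hCeq z₀]
        exact (hsumvv z₀).hasSum.tendsto_sum_nat
      obtain ⟨n, hn⟩ := (Metric.tendsto_atTop.mp hpart) (ε / 3) (by linarith)
      have hn := hn n le_rfl
      rw [Real.dist_eq] at hn
      have hCz₀ : C z₀ - ∑ j ∈ Finset.range n, vv j z₀ < ε / 3 := by
        have := abs_lt.mp hn
        linarith [this.1]
      have hScont : Continuous fun z : U × V =>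
          ∑ j ∈ Finset.range n, (if j = i then 0 else q i j z.1 z.2 * φ j) :=
        continuous_finset_sum _ fun j _ => huucont j
      have hDcont : Continuous fun z : U × V => C z - ∑ j ∈ Finset.range n, vv j z :=
        hCcont.sub (continuous_finset_sum _ fun j _ => hvvcont j)
      have hev1 : ∀ᶠ z in 𝓝 z₀, C z - ∑ j ∈ Finset.range n, vv j z < ε / 3 :=
        (isOpen_lt hDcont continuous_const).mem_nhds hCz₀
      have hev2 : ∀ᶠ z in 𝓝 z₀,
          |(∑ j ∈ Finset.range n, (if j = i then 0 else q i j z.1 z.2 * φ j))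
            - ∑ j ∈ Finset.range n, (if j = i then 0 else q i j z₀.1 z₀.2 * φ j)| < ε / 3 := by
        have h := Metric.tendsto_nhds.mp (hScont.tendsto z₀) (ε / 3) (by linarith)
        simpa [Real.dist_eq] using h
      filter_upwards [hev1, hev2] with z h1 h2
      rw [Real.dist_eq, abs_lt]
      have e1 := htailF n z
      have e2 := hFtail0 n z
      have e3 := htailF n z₀
      have e4 := hFtail0 n z₀
      have e5 := abs_lt.mp h2
      constructor <;> linarith [e5.1, e5.2, hCz₀, h1]
    exact this
  -- continuity of the full integrand
  have hGcont : Continuous fun z : U × V => r i z.1 z.2 + ∑' j, q i j z.1 z.2 * φ j := by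
    have h1 : Continuous fun z : U × V =>
        r i z.1 z.2 + (q i i z.1 z.2 * φ i + ∑' j, (if j = i then 0 else q i j z.1 z.2 * φ j)) :=
      (hA2.r_cont i).add (((hA2.q_cont i i).mul continuous_const).add hFcont)
    exact h1.congr fun z => by rw [hqφ_eq z.1 z.2]
  -- integral representation
  have hrep : ∀ (μ : ProbabilityMeasure U) (ν : ProbabilityMeasure V),
      rT r i μ ν + ∑' j, qT q i j μ ν * φ j
        = ∫ b, (∫ a, (r i a b + ∑' j, q i j a b * φ j) ∂(μ : Measure U)) ∂(ν : Measure V) := by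
    intro μ ν
    set π : Measure (V × U) := (ν : Measure V).prod (μ : Measure U) with hπ
    haveI : IsProbabilityMeasure π := by rw [hπ]; infer_instance
    have hswap : Continuous fun z : V × U => ((z.2, z.1) : U × V) :=
      continuous_snd.prodMk continuous_fst
    have hrcont : Continuous fun z : V × U => r i z.2 z.1 := (hA2.r_cont i).comp hswap
    have hqcont : ∀ j, Continuous fun z : V × U => q i j z.2 z.1 :=
      fun j => (hA2.q_cont i j).comp hswap
    have hFcont' : Continuous fun z : V × U =>
        ∑' j, (if j = i then 0 else q i j z.2 z.1 * φ j) := hFcont.comp hswap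
    have hGcont' : Continuous fun z : V × U => r i z.2 z.1 + ∑' j, q i j z.2 z.1 * φ j :=
      hGcont.comp hswap
    have h1 : rT r i μ ν = ∫ z, r i z.2 z.1 ∂π := by
      rw [rT]
      exact (MeasureTheory.integral_prod _ (myIntegrable hrcont π)).symm
    have h2 : ∀ j, qT q i j μ ν = ∫ z, q i j z.2 z.1 ∂π := by
      intro j
      rw [qT]
      exact (MeasureTheory.integral_prod _ (myIntegrable (hqcont j) π)).symm
    set uu : ℕ → V × U → ℝ := fun j z => if j = i then 0 else q i j z.2 z.1 * φ j with huu
    have huucont' : ∀ j, Continuous (uu j) := by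
      intro j
      by_cases h : j = i
      · simpa [huu, h] using (continuous_const : Continuous fun _ : V × U => (0:ℝ))
      · simp only [huu, h, if_false]
        exact (hqcont j).mul continuous_const
    have hsplit : ∀ j, qT q i j μ ν * φ j
        = (if j = i then (∫ z, q i i z.2 z.1 ∂π) * φ i else 0) + ∫ z, uu j z ∂π := by
      intro j
      by_cases h : j = i
      · rw [h, h2 i]
        simp [huu]
      · simp only [huu, if_neg h, zero_add]
        rw [h2 j, ← integral_mul_const]
    have hlin : ∑' j, ∫⁻ z, ‖uu j z‖₊ ∂π ≠ ⊤ := by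
      rw [← MeasureTheory.lintegral_tsum
        (fun j => ((huucont' j).measurable.nnnorm.coe_nnreal_ennreal).aemeasurable)]
      have hub : ∀ z : V × U,
          (∑' j, (‖uu j z‖₊ : ℝ≥0∞)) ≤ ENNReal.ofReal (K * ((1 + qb i) * W i)) := by
        intro z
        have hval : ∀ j, (‖uu j z‖₊ : ℝ≥0∞) = ENNReal.ofReal (uu j z) :=
          fun j => Real.enorm_eq_ofReal (hptnn z.2 z.1 j)
        calc (∑' j, (‖uu j z‖₊ : ℝ≥0∞)) = ∑' j, ENNReal.ofReal (uu j z) := by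
              exact tsum_congr hval
          _ = ENNReal.ofReal (∑' j, uu j z) :=
              (ENNReal.ofReal_tsum_of_nonneg (fun j => hptnn z.2 z.1 j) (hsumu z.2 z.1)).symm
          _ ≤ ENNReal.ofReal (K * ((1 + qb i) * W i)) :=
              ENNReal.ofReal_le_ofReal (htsumu_le z.2 z.1)
      have hle : ∫⁻ z, (∑' j, (‖uu j z‖₊ : ℝ≥0∞)) ∂π
          ≤ ENNReal.ofReal (K * ((1 + qb i) * W i)) := by
        calc ∫⁻ z, (∑' j, (‖uu j z‖₊ : ℝ≥0∞)) ∂π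
            ≤ ∫⁻ _, ENNReal.ofReal (K * ((1 + qb i) * W i)) ∂π :=
              MeasureTheory.lintegral_mono hub
          _ = ENNReal.ofReal (K * ((1 + qb i) * W i)) := by
              simp [MeasureTheory.lintegral_const]
      exact (lt_of_le_of_lt hle ENNReal.ofReal_lt_top).ne
    have hsum_int_u : Summable fun j => ∫ z, uu j z ∂π := by
      have h0 : ∀ j, ∫ z, uu j z ∂π = (∫⁻ z, ‖uu j z‖₊ ∂π).toReal := by
        intro j
        rw [MeasureTheory.integral_eq_lintegral_of_nonneg_ae
          (Eventually.of_forall fun z => hptnn z.2 z.1 j : 0 ≤ᵐ[π] uu j)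
          (huucont' j).aestronglyMeasurable]
        congr 1
        apply MeasureTheory.lintegral_congr
        intro z
        exact (Real.enorm_eq_ofReal (hptnn z.2 z.1 j)).symm
      exact (ENNReal.summable_toReal hlin).congr fun j => (h0 j).symm
    have hswap_int : ∑' j, ∫ z, uu j z ∂π = ∫ z, ∑' j, uu j z ∂π :=
      (MeasureTheory.integral_tsum (fun j => (huucont' j).aestronglyMeasurable) hlin).symm
    have hdsum : Summable fun j => (if j = i then (∫ z, q i i z.2 z.1 ∂π) * φ i else (0:ℝ)) :=
      ((summable_zero : Summable fun _ : ℕ => (0:ℝ)).update i _).congr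
        fun j => (Function.update_apply _ i _ j)
    have hdtsum : ∑' j, (if j = i then (∫ z, q i i z.2 z.1 ∂π) * φ i else (0:ℝ))
        = (∫ z, q i i z.2 z.1 ∂π) * φ i := tsum_ite_eq i _
    calc rT r i μ ν + ∑' j, qT q i j μ ν * φ j
        = (∫ z, r i z.2 z.1 ∂π)
          + (((∫ z, q i i z.2 z.1 ∂π) * φ i) + ∑' j, ∫ z, uu j z ∂π) := by
          rw [h1, tsum_congr hsplit, Summable.tsum_add hdsum hsum_int_u, hdtsum]
      _ = (∫ z, r i z.2 z.1 ∂π)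
          + ((∫ z, q i i z.2 z.1 * φ i ∂π) + ∫ z, ∑' j, uu j z ∂π) := by
          rw [hswap_int, integral_mul_const]
      _ = ∫ z, (r i z.2 z.1 + (q i i z.2 z.1 * φ i + ∑' j, uu j z)) ∂π := by
          rw [← MeasureTheory.integral_add (f := fun z : V × U => q i i z.2 z.1 * φ i)
            (g := fun z : V × U => ∑' j, uu j z) (myIntegrable ((hqcont i).mul continuous_const) π)
            (myIntegrable hFcont' π),
            ← MeasureTheory.integral_add (f := fun z : V × U => r i z.2 z.1)
            (g := fun z : V × U => q i i z.2 z.1 * φ i + ∑' j, uu j z) (myIntegrable hrcont π)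
            (myIntegrable (((hqcont i).mul continuous_const).add hFcont') π)]
      _ = ∫ z, (r i z.2 z.1 + ∑' j, q i j z.2 z.1 * φ j) ∂π := by
          have hfun : (fun z : V × U => r i z.2 z.1 + (q i i z.2 z.1 * φ i + ∑' j, uu j z))
              = fun z : V × U => r i z.2 z.1 + ∑' j, q i j z.2 z.1 * φ j := by
            funext z
            simp only [huu]
            rw [hqφ_eq z.2 z.1]
          rw [← hfun]
      _ = ∫ b, (∫ a, (r i a b + ∑' j, q i j a b * φ j) ∂(μ : Measure U)) ∂(ν : Measure V) :=
          MeasureTheory.integral_prod _ (myIntegrable hGcont' π)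
  have hmain := contIter (fun a b => r i a b + ∑' j, q i j a b * φ j) hGcont
  exact hmain.congr fun p => (hrep p.1 p.2).symm
end

section
/- (Proposition 2, monotonicity of the iterates.) Under (A1) and (A2), the sequence of functions defined by u_0 := ψ_2 and u_n := T u_{n−1} for n ≥ 1 is pointwise nondecreasing: u_n(i) ≤ u_{n+1}(i) for all n ≥ 0 and all i ∈ S. -/
set_option linter.unusedSectionVars false
set_option maxHeartbeats 1000000


open MeasureTheory Filter Topology

noncomputable section

variable {U V : Type}

namespace MonotoneAux
variable [MetricSpace U] [CompactSpace U] [Nonempty U] [MeasurableSpace U] [BorelSpace U]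
  [MetricSpace V] [CompactSpace V] [Nonempty V] [MeasurableSpace V] [BorelSpace V]

lemma exists_bound {f : U → V → ℝ} (hf : Continuous fun ab : U × V => f ab.1 ab.2) :
    ∃ C : ℝ, ∀ a b, ‖f a b‖ ≤ C := by
  obtain ⟨C, hC⟩ := (isCompact_range hf.norm).bddAbove
  exact ⟨C, fun a b => hC ⟨(a, b), rfl⟩⟩

lemma cont_fst {f : U → V → ℝ} (hf : Continuous fun ab : U × V => f ab.1 ab.2) (b : V) :
    Continuous fun a => f a b :=
  hf.comp (continuous_id.prodMk continuous_const)

lemma integrable_cont {X : Type} [MetricSpace X] [CompactSpace X] [MeasurableSpace X] [BorelSpace X]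
    {f : X → ℝ} (hf : Continuous f) (μ : ProbabilityMeasure X) :
    Integrable f (μ : Measure X) := by
  obtain ⟨C, hC⟩ := (isCompact_range hf.norm).bddAbove
  exact ⟨hf.aestronglyMeasurable, HasFiniteIntegral.of_bounded (C := C)
    (Filter.Eventually.of_forall fun a => hC ⟨a, rfl⟩)⟩

lemma outer_integrable {f : U → V → ℝ} (hf : Continuous fun ab : U × V => f ab.1 ab.2)
    (μ : ProbabilityMeasure U) (ν : ProbabilityMeasure V) :
    Integrable (fun b => ∫ a, f a b ∂(μ : Measure U)) (ν : Measure V) := by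
  obtain ⟨C, hC⟩ := exists_bound hf
  have hmeas : StronglyMeasurable fun b => ∫ a, f a b ∂(μ : Measure U) := by
    have h2 : StronglyMeasurable fun p : V × U => f p.2 p.1 :=
      (hf.comp (continuous_snd.prodMk continuous_fst)).stronglyMeasurable
    exact h2.integral_prod_right'
  refine ⟨hmeas.aestronglyMeasurable, HasFiniteIntegral.of_bounded (C := C)
    (Filter.Eventually.of_forall fun b => ?_)⟩
  calc ‖∫ a, f a b ∂(μ : Measure U)‖
      ≤ ∫ a, C ∂(μ : Measure U) :=
        norm_integral_le_of_norm_le (integrable_const C)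
          (Filter.Eventually.of_forall fun a => hC a b)
    _ = C := by simp

lemma J_mono {f g : U → V → ℝ} (hfc : Continuous fun ab : U × V => f ab.1 ab.2)
    (hgc : Continuous fun ab : U × V => g ab.1 ab.2) (h : ∀ a b, f a b ≤ g a b)
    (μ : ProbabilityMeasure U) (ν : ProbabilityMeasure V) :
    ∫ b, (∫ a, f a b ∂(μ : Measure U)) ∂(ν : Measure V)
      ≤ ∫ b, (∫ a, g a b ∂(μ : Measure U)) ∂(ν : Measure V) := by
  refine integral_mono (outer_integrable hfc μ ν) (outer_integrable hgc μ ν) fun b => ?_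
  exact integral_mono (integrable_cont (cont_fst hfc b) μ) (integrable_cont (cont_fst hgc b) μ)
    fun a => h a b

lemma J_const (c : ℝ) (μ : ProbabilityMeasure U) (ν : ProbabilityMeasure V) :
    ∫ _b, (∫ _a, c ∂(μ : Measure U)) ∂(ν : Measure V) = c := by simp

lemma J_le_const {f : U → V → ℝ} (hfc : Continuous fun ab : U × V => f ab.1 ab.2)
    {c : ℝ} (h : ∀ a b, f a b ≤ c) (μ : ProbabilityMeasure U) (ν : ProbabilityMeasure V) :
    ∫ b, (∫ a, f a b ∂(μ : Measure U)) ∂(ν : Measure V) ≤ c := by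
  have := J_mono hfc continuous_const h μ ν
  rwa [J_const] at this

lemma const_le_J {f : U → V → ℝ} (hfc : Continuous fun ab : U × V => f ab.1 ab.2)
    {c : ℝ} (h : ∀ a b, c ≤ f a b) (μ : ProbabilityMeasure U) (ν : ProbabilityMeasure V) :
    c ≤ ∫ b, (∫ a, f a b ∂(μ : Measure U)) ∂(ν : Measure V) := by
  have := J_mono continuous_const hfc h μ ν
  rwa [J_const] at this

lemma J_nonneg {f : U → V → ℝ} (h : ∀ a b, 0 ≤ f a b)
    (μ : ProbabilityMeasure U) (ν : ProbabilityMeasure V) :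
    0 ≤ ∫ b, (∫ a, f a b ∂(μ : Measure U)) ∂(ν : Measure V) :=
  integral_nonneg fun b => integral_nonneg fun a => h a b

lemma J_nonpos {f : U → V → ℝ} (h : ∀ a b, f a b ≤ 0)
    (μ : ProbabilityMeasure U) (ν : ProbabilityMeasure V) :
    ∫ b, (∫ a, f a b ∂(μ : Measure U)) ∂(ν : Measure V) ≤ 0 :=
  integral_nonpos fun b => integral_nonpos fun a => h a b

lemma J_finset_sum {s : Finset ℕ} {f : ℕ → U → V → ℝ}
    (hc : ∀ j ∈ s, Continuous fun ab : U × V => f j ab.1 ab.2)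
    (μ : ProbabilityMeasure U) (ν : ProbabilityMeasure V) :
    ∫ b, (∫ a, (∑ j ∈ s, f j a b) ∂(μ : Measure U)) ∂(ν : Measure V)
      = ∑ j ∈ s, ∫ b, (∫ a, f j a b ∂(μ : Measure U)) ∂(ν : Measure V) := by
  have h1 : ∀ b : V, ∫ a, (∑ j ∈ s, f j a b) ∂(μ : Measure U)
      = ∑ j ∈ s, ∫ a, f j a b ∂(μ : Measure U) := fun b =>
    integral_finset_sum s fun j hj => integrable_cont (cont_fst (hc j hj) b) μ
  rw [integral_congr_ae (Filter.Eventually.of_forall h1)]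
  exact integral_finset_sum s fun j hj => outer_integrable (hc j hj) μ ν

lemma J_mul_const (f : U → V → ℝ) (c : ℝ) (μ : ProbabilityMeasure U) (ν : ProbabilityMeasure V) :
    ∫ b, (∫ a, f a b * c ∂(μ : Measure U)) ∂(ν : Measure V)
      = (∫ b, (∫ a, f a b ∂(μ : Measure U)) ∂(ν : Measure V)) * c := by
  simp_rw [integral_mul_const]

lemma summable_ite_zero {h : ℕ → ℝ} (hs : Summable h) (i : ℕ) :
    Summable fun j => if j = i then 0 else h j := by
  have heq : (fun j => if j = i then 0 else h j)
      = fun j => h j - if j = i then h i else 0 := by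
    funext j
    by_cases hj : j = i
    · subst hj; simp
    · simp [hj]
  rw [heq]
  exact hs.sub (summable_of_ne_finset_zero (s := {i}) (by intro j hj; simp at hj; simp [hj]))

lemma Iop_mono (q : ℕ → ℕ → U → V → ℝ) (r : ℕ → U → V → ℝ) (qb : ℕ → ℝ)
    (N : ℕ) (w : ℕ → ℕ → ℝ) (c : ℝ) (W : ℕ → ℝ) (M : ℝ) (α : ℝ)
    (hrate : RateHyps q qb) (hA1 : A1Hyps q qb N w c W) (hA2 : A2Hyps q r W M)
    (hα : 0 < α) (hM : 0 ≤ M)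
    {φ φ' : ℕ → ℝ} (hφ0 : ∀ j, 0 ≤ φ j) (hle : ∀ j, φ j ≤ φ' j) (hub : ∀ j, φ' j ≤ M * W j)
    (i : ℕ) : Iop q r qb α φ i ≤ Iop q r qb α φ' i := by
  classical
  have hφ'0 : ∀ j, 0 ≤ φ' j := fun j => (hφ0 j).trans (hle j)
  obtain ⟨a0⟩ := (inferInstance : Nonempty U)
  obtain ⟨b0⟩ := (inferInstance : Nonempty V)
  -- basic positivity
  have hqb0 : 0 ≤ qb i := by
    have h1 : (0 : ℝ) ≤ ∑' j, if j = i then (0:ℝ) else q i j a0 b0 :=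
      tsum_nonneg fun j => by
        by_cases hj : j = i
        · simp [hj]
        · simpa [hj] using hrate.off_nonneg i j a0 b0 hj
    exact h1.trans ((hrate.stable i).1 ⟨(a0, b0), rfl⟩)
  have hd : (0:ℝ) < qb i + 1 := by linarith
  have hD : (0:ℝ) < α + qb i + 1 := by linarith
  -- pointwise facts about q
  have hsum : ∀ a b, Summable fun j => q i j a b := hrate.summable i
  have hdiag_eq : ∀ a b, q i i a b = -∑' j, if j = i then (0:ℝ) else q i j a b := by
    intro a b
    have h0 := hrate.conservative i a b
    have h2 := Summable.tsum_eq_add_tsum_ite (hsum a b) i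
    rw [h0] at h2
    linarith
  have hoffsum_le : ∀ a b, (∑' j, if j = i then (0:ℝ) else q i j a b) ≤ qb i :=
    fun a b => (hrate.stable i).1 ⟨(a, b), rfl⟩
  have hoffsum_nn : ∀ a b, (0:ℝ) ≤ ∑' j, if j = i then (0:ℝ) else q i j a b := by
    intro a b
    refine tsum_nonneg fun j => ?_
    by_cases hj : j = i
    · simp [hj]
    · simpa [hj] using hrate.off_nonneg i j a b hj
  have hdiag_ge : ∀ a b, -qb i ≤ q i i a b := fun a b => by
    rw [hdiag_eq a b]; linarith [hoffsum_le a b]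
  have hdiag_le : ∀ a b, q i i a b ≤ 0 := fun a b => by
    rw [hdiag_eq a b]; linarith [hoffsum_nn a b]
  -- summability of q * W
  have hsumW : ∀ a b, Summable fun j => q i j a b * W j := by
    intro a b
    have heq : (fun j => q i j a b * W j)
        = fun j => ∑ n ∈ Finset.range N, q i j a b * w n j := by
      funext j; rw [hA1.W_def j, Finset.mul_sum]
    rw [heq]
    exact summable_sum fun n hn => hA1.w_summable n (Finset.mem_range.mp hn) i a b
  -- the constant K bounding the off-diagonal sums
  have hgcont : Continuous fun ab : U × V =>
      (∑' j, q i j ab.1 ab.2 * W j) - q i i ab.1 ab.2 * W i :=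
    (hA2.qW_cont i).sub ((hA2.q_cont i i).mul continuous_const)
  obtain ⟨K, hK⟩ := (isCompact_range hgcont).bddAbove
  have hoffW_eq : ∀ a b, (∑' j, if j = i then (0:ℝ) else q i j a b * W j)
      = (∑' j, q i j a b * W j) - q i i a b * W i := by
    intro a b
    have h2 := Summable.tsum_eq_add_tsum_ite (hsumW a b) i
    linarith
  have hKub : ∀ a b, (∑' j, if j = i then (0:ℝ) else q i j a b * W j) ≤ K := by
    intro a b
    rw [hoffW_eq a b]
    exact hK ⟨(a, b), rfl⟩
  have hoffW_nn : ∀ a b, (0:ℝ) ≤ ∑' j, if j = i then (0:ℝ) else q i j a b * W j := by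
    intro a b
    refine tsum_nonneg fun j => ?_
    by_cases hj : j = i
    · simp [hj]
    · simp only [if_neg hj]
      exact mul_nonneg (hrate.off_nonneg i j a b hj) (hA1.W_pos j).le
  have hK0 : (0:ℝ) ≤ K := (hoffW_nn a0 b0).trans (hKub a0 b0)
  -- qT facts
  have hqcont : ∀ j, Continuous fun ab : U × V => q i j ab.1 ab.2 := hA2.q_cont i
  have hqT_off_nn : ∀ (j) (_ : j ≠ i) (μ : ProbabilityMeasure U) (ν : ProbabilityMeasure V),
      0 ≤ qT q i j μ ν := fun j hj μ ν =>
    J_nonneg (fun a b => hrate.off_nonneg i j a b hj) μ ν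
  have hqT_diag_ge : ∀ (μ : ProbabilityMeasure U) (ν : ProbabilityMeasure V),
      -qb i ≤ qT q i i μ ν := fun μ ν => const_le_J (hqcont i) hdiag_ge μ ν
  have hqT_diag_le : ∀ (μ : ProbabilityMeasure U) (ν : ProbabilityMeasure V),
      qT q i i μ ν ≤ 0 := fun μ ν => J_nonpos hdiag_le μ ν
  have hpT_nn : ∀ (μ : ProbabilityMeasure U) (ν : ProbabilityMeasure V) (j),
      0 ≤ pT q qb i j μ ν := by
    intro μ ν j
    unfold pT
    by_cases hj : j = i
    · rw [hj, if_pos rfl]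
      have h1 := hqT_diag_ge μ ν
      have h2 : -qb i / (qb i + 1) ≤ qT q i i μ ν / (qb i + 1) := by gcongr
      have h3 : -qb i / (qb i + 1) + 1 = 1 / (qb i + 1) := by field_simp; ring
      have h4 : (0:ℝ) ≤ 1 / (qb i + 1) := by positivity
      linarith
    · rw [if_neg (fun h => hj h.symm), add_zero]
      exact div_nonneg (hqT_off_nn j hj μ ν) hd.le
  have hpT_diag_le_one : ∀ (μ : ProbabilityMeasure U) (ν : ProbabilityMeasure V),
      pT q qb i i μ ν ≤ 1 := by
    intro μ ν
    unfold pT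
    rw [if_pos rfl]
    have h1 : qT q i i μ ν / (qb i + 1) ≤ 0 :=
      div_nonpos_of_nonpos_of_nonneg (hqT_diag_le μ ν) hd.le
    linarith
  -- off-diagonal qT * W : summable and bounded by K
  have hoffqW : ∀ (μ : ProbabilityMeasure U) (ν : ProbabilityMeasure V),
      Summable (fun j => if j = i then (0:ℝ) else qT q i j μ ν * W j)
      ∧ (∑' j, if j = i then (0:ℝ) else qT q i j μ ν * W j) ≤ K := by
    intro μ ν
    have hFnn : ∀ j, 0 ≤ (if j = i then (0:ℝ) else qT q i j μ ν * W j) := by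
      intro j
      by_cases hj : j = i
      · simp [hj]
      · simp only [if_neg hj]
        exact mul_nonneg (hqT_off_nn j hj μ ν) (hA1.W_pos j).le
    have hcontj : ∀ j, Continuous fun ab : U × V =>
        (if j = i then (0:ℝ) else q i j ab.1 ab.2 * W j) := by
      intro j
      by_cases hj : j = i
      · simp only [if_pos hj]; exact continuous_const
      · simp only [if_neg hj]; exact (hqcont j).mul continuous_const
    have hterm : ∀ j, (if j = i then (0:ℝ) else qT q i j μ ν * W j)
        = ∫ b, (∫ a, (if j = i then (0:ℝ) else q i j a b * W j) ∂(μ : Measure U))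
            ∂(ν : Measure V) := by
      intro j
      by_cases hj : j = i
      · simp [hj]
      · simp only [if_neg hj]
        exact (J_mul_const (fun a b => q i j a b) (W j) μ ν).symm
    have hpart : ∀ n, ∑ j ∈ Finset.range n,
        (if j = i then (0:ℝ) else qT q i j μ ν * W j) ≤ K := by
      intro n
      have e1 : ∑ j ∈ Finset.range n, (if j = i then (0:ℝ) else qT q i j μ ν * W j)
          = ∫ b, (∫ a, (∑ j ∈ Finset.range n,
              (if j = i then (0:ℝ) else q i j a b * W j)) ∂(μ : Measure U))
              ∂(ν : Measure V) := by
        rw [J_finset_sum (fun j _ => hcontj j) μ ν]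
        exact Finset.sum_congr rfl fun j _ => hterm j
      rw [e1]
      refine J_le_const (continuous_finset_sum _ fun j _ => hcontj j) (fun a b => ?_) μ ν
      calc ∑ j ∈ Finset.range n, (if j = i then (0:ℝ) else q i j a b * W j)
          ≤ ∑' j, (if j = i then (0:ℝ) else q i j a b * W j) := by
            refine Summable.sum_le_tsum _ (fun j _ => ?_) (summable_ite_zero (hsumW a b) i)
            by_cases hj : j = i
            · simp [hj]
            · simp only [if_neg hj]
              exact mul_nonneg (hrate.off_nonneg i j a b hj) (hA1.W_pos j).le
        _ ≤ K := hKub a b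
    exact ⟨summable_of_sum_range_le hFnn hpart, Real.tsum_le_of_sum_range_le hFnn hpart⟩
  -- dominating series
  have hdom : ∀ (μ : ProbabilityMeasure U) (ν : ProbabilityMeasure V) (ψ : ℕ → ℝ),
      (∀ j, 0 ≤ ψ j) → (∀ j, ψ j ≤ M * W j) →
      Summable (fun j => pT q qb i j μ ν * ψ j)
      ∧ (∑' j, pT q qb i j μ ν * ψ j) ≤ M * W i + M / (qb i + 1) * K := by
    intro μ ν ψ hψ0 hψub
    obtain ⟨hSF, hTF⟩ := hoffqW μ ν
    set t : ℕ → ℝ := fun j => (if j = i then M * W i else 0)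
      + M / (qb i + 1) * (if j = i then (0:ℝ) else qT q i j μ ν * W j) with ht
    have hsingle : Summable fun j => (if j = i then M * W i else (0:ℝ)) :=
      summable_of_ne_finset_zero (s := {i}) (by intro j hj; simp at hj; simp [hj])
    have hts : Summable t := hsingle.add (hSF.mul_left _)
    have htt : ∑' j, t j = M * W i
        + M / (qb i + 1) * ∑' j, (if j = i then (0:ℝ) else qT q i j μ ν * W j) := by
      rw [ht, Summable.tsum_add hsingle (hSF.mul_left _), tsum_ite_eq, tsum_mul_left]
    have hst : ∀ j, pT q qb i j μ ν * ψ j ≤ t j := by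
      intro j
      by_cases hj : j = i
      · rw [hj]
        simp only [ht, eq_self_iff_true, if_true, if_pos rfl, mul_zero, add_zero]
        calc pT q qb i i μ ν * ψ i ≤ 1 * (M * W i) :=
              mul_le_mul (hpT_diag_le_one μ ν) (hψub i) (hψ0 i) zero_le_one
          _ = M * W i := one_mul _
      · simp only [ht, if_neg hj, zero_add]
        have hpj : pT q qb i j μ ν = qT q i j μ ν / (qb i + 1) := by
          unfold pT
          rw [if_neg (fun h => hj h.symm), add_zero]
        rw [hpj]
        calc qT q i j μ ν / (qb i + 1) * ψ j
            ≤ qT q i j μ ν / (qb i + 1) * (M * W j) :=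
              mul_le_mul_of_nonneg_left (hψub j) (div_nonneg (hqT_off_nn j hj μ ν) hd.le)
          _ = M / (qb i + 1) * (qT q i j μ ν * W j) := by ring
    have hnn : ∀ j, 0 ≤ pT q qb i j μ ν * ψ j :=
      fun j => mul_nonneg (hpT_nn μ ν j) (hψ0 j)
    have hs : Summable fun j => pT q qb i j μ ν * ψ j :=
      Summable.of_nonneg_of_le hnn hst hts
    refine ⟨hs, ?_⟩
    have h5 := Summable.tsum_le_tsum hst hs hts
    rw [htt] at h5
    have h6 : M / (qb i + 1) * (∑' j, if j = i then (0:ℝ) else qT q i j μ ν * W j)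
        ≤ M / (qb i + 1) * K := mul_le_mul_of_nonneg_left hTF (by positivity)
    linarith
  -- rT bounds
  have hrT_ub : ∀ (μ : ProbabilityMeasure U) (ν : ProbabilityMeasure V),
      rT r i μ ν ≤ M * W i := fun μ ν => J_le_const (hA2.r_cont i) (hA2.r_le i) μ ν
  have hrT_nn : ∀ (μ : ProbabilityMeasure U) (ν : ProbabilityMeasure V),
      0 ≤ rT r i μ ν := fun μ ν => J_nonneg (hA2.r_nonneg i) μ ν
  -- conclude
  unfold Iop
  haveI : Nonempty (ProbabilityMeasure U) := ⟨⟨Measure.dirac a0, inferInstance⟩⟩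
  haveI : Nonempty (ProbabilityMeasure V) := ⟨⟨Measure.dirac b0, inferInstance⟩⟩
  apply ciInf_mono
  · refine ⟨0, ?_⟩
    rintro x ⟨μ, rfl⟩
    refine Real.iSup_nonneg fun ν => ?_
    have h1 : 0 ≤ rT r i μ ν / (α + qb i + 1) := div_nonneg (hrT_nn μ ν) hD.le
    have h2 : 0 ≤ ∑' j, pT q qb i j μ ν * φ j :=
      tsum_nonneg fun j => mul_nonneg (hpT_nn μ ν j) (hφ0 j)
    have h3 : 0 ≤ (qb i + 1) / (α + qb i + 1) := by positivity
    have := mul_nonneg h3 h2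
    linarith
  · intro μ
    apply ciSup_mono
    · refine ⟨M * W i / (α + qb i + 1)
        + (qb i + 1) / (α + qb i + 1) * (M * W i + M / (qb i + 1) * K), ?_⟩
      rintro x ⟨ν, rfl⟩
      obtain ⟨hs', ht'⟩ := hdom μ ν φ' hφ'0 hub
      have e1 : rT r i μ ν / (α + qb i + 1) ≤ M * W i / (α + qb i + 1) := by
        gcongr
        exact hrT_ub μ ν
      have e2 : (qb i + 1) / (α + qb i + 1) * (∑' j, pT q qb i j μ ν * φ' j)
          ≤ (qb i + 1) / (α + qb i + 1) * (M * W i + M / (qb i + 1) * K) :=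
        mul_le_mul_of_nonneg_left ht' (by positivity)
      linarith
    · intro ν
      obtain ⟨hsφ', _⟩ := hdom μ ν φ' hφ'0 hub
      have hsφ : Summable fun j => pT q qb i j μ ν * φ j :=
        Summable.of_nonneg_of_le (fun j => mul_nonneg (hpT_nn μ ν j) (hφ0 j))
          (fun j => mul_le_mul_of_nonneg_left (hle j) (hpT_nn μ ν j)) hsφ'
      have h7 := Summable.tsum_le_tsum
        (fun j => mul_le_mul_of_nonneg_left (hle j) (hpT_nn μ ν j)) hsφ hsφ'
      have h8 : (qb i + 1) / (α + qb i + 1) * (∑' j, pT q qb i j μ ν * φ j)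
          ≤ (qb i + 1) / (α + qb i + 1) * (∑' j, pT q qb i j μ ν * φ' j) :=
        mul_le_mul_of_nonneg_left h7 (by positivity)
      linarith

end MonotoneAux
end


/-- Proposition 2: the iterates `u_0 = ψ₂`, `u_n = T u_(n-1)` are pointwise
nondecreasing. -/
theorem stmt13 {U V : Type} [MetricSpace U] [CompactSpace U] [Nonempty U]
    [MeasurableSpace U] [BorelSpace U]
    [MetricSpace V] [CompactSpace V] [Nonempty V]
    [MeasurableSpace V] [BorelSpace V]
    (q : ℕ → ℕ → U → V → ℝ) (r : ℕ → U → V → ℝ) (qb : ℕ → ℝ)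
    (N : ℕ) (w : ℕ → ℕ → ℝ) (c : ℝ) (W : ℕ → ℝ) (M : ℝ) (α : ℝ) (ψ₁ ψ₂ : ℕ → ℝ)
    (hrate : RateHyps q qb) (hA1 : A1Hyps q qb N w c W)
    (hA2 : A2Hyps q r W M) (hψ : PsiHyps ψ₁ ψ₂ W M) (hα : 0 < α) :
    ∀ u : ℕ → ℕ → ℝ, u 0 = ψ₂ → (∀ n, u (n + 1) = Tmap q r qb α ψ₁ ψ₂ (u n)) →
      ∀ (n : ℕ) (i : ℕ), u n i ≤ u (n + 1) i := by
  intro u h0 hrec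
  have hM : 0 ≤ M := by
    nlinarith [hA1.W_pos 0, hψ.ψ₂_nonneg 0, hψ.ψ₂_lt_ψ₁ 0, hψ.ψ₁_le 0]
  have hbnd : ∀ n j, 0 ≤ u n j ∧ u n j ≤ M * W j := by
    intro n j
    cases n with
    | zero =>
      rw [h0]
      exact ⟨hψ.ψ₂_nonneg j, (hψ.ψ₂_lt_ψ₁ j).le.trans (hψ.ψ₁_le j)⟩
    | succ m =>
      rw [hrec m]
      unfold Tmap
      constructor
      · exact le_min ((hψ.ψ₂_nonneg j).trans (le_max_right _ _))
          ((hψ.ψ₂_nonneg j).trans (hψ.ψ₂_lt_ψ₁ j).le)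
      · exact (min_le_right _ _).trans (hψ.ψ₁_le j)
  have key : ∀ n, ∀ j, u n j ≤ u (n + 1) j := by
    intro n
    induction n with
    | zero =>
      intro j
      rw [hrec 0, h0]
      exact le_min (le_max_right _ _) (hψ.ψ₂_lt_ψ₁ j).le
    | succ m ih =>
      intro j
      rw [hrec m, hrec (m + 1)]
      unfold Tmap
      refine min_le_min (max_le_max ?_ le_rfl) le_rfl
      exact MonotoneAux.Iop_mono q r qb N w c W M α hrate hA1 hA2 hα hM
        (fun k => (hbnd m k).1) ih (fun k => (hbnd (m + 1) k).2) j
  exact fun n i => key n i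
end

section
/- (Proposition 2, convergence of the iterates.) Under (A1) and (A2), the sequence u_0 := ψ_2, u_n := T u_{n−1} (n ≥ 1) converges pointwise to a function u*(i) := lim_{n→∞} u_n(i), and u* ∈ B_W(S) with ψ_2(i) ≤ u*(i) ≤ ψ_1(i) for all i ∈ S and ‖u*‖_W ≤ M. -/
open MeasureTheory Filter Topology

section DIntHelpers
variable {U V : Type} [MetricSpace U] [CompactSpace U] [Nonempty U]
    [MeasurableSpace U] [BorelSpace U]
    [MetricSpace V] [CompactSpace V] [Nonempty V]
    [MeasurableSpace V] [BorelSpace V]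

set_option linter.unusedSectionVars false

lemma myInt_inner (f : U × V → ℝ) (hf : Continuous f) (μ : ProbabilityMeasure U) (b : V) :
    Integrable (fun a => f (a, b)) (μ : Measure U) :=
  (hf.comp (Continuous.prodMk_left b)).integrable_of_hasCompactSupport
    ((isClosed_tsupport _).isCompact)

lemma myCont_inner (f : U × V → ℝ) (hf : Continuous f) (μ : ProbabilityMeasure U) :
    Continuous (fun b => ∫ a, f (a, b) ∂(μ : Measure U)) := by
  obtain ⟨x, hx⟩ := hf.norm.exists_forall_ge (by simp [Filter.cocompact_eq_bot])
  exact continuous_of_dominated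
    (fun b => ((hf.comp (Continuous.prodMk_left b)).aestronglyMeasurable))
    (fun b => Filter.Eventually.of_forall fun a => hx (a, b))
    (integrable_const _)
    (Filter.Eventually.of_forall fun a => hf.comp (Continuous.prodMk_right a))

lemma myInt_outer (f : U × V → ℝ) (hf : Continuous f) (μ : ProbabilityMeasure U)
    (ν : ProbabilityMeasure V) :
    Integrable (fun b => ∫ a, f (a, b) ∂(μ : Measure U)) (ν : Measure V) :=
  (myCont_inner f hf μ).integrable_of_hasCompactSupport ((isClosed_tsupport _).isCompact)

/-- double integral -/
noncomputable def dInt (f : U × V → ℝ) (μ : ProbabilityMeasure U) (ν : ProbabilityMeasure V) : ℝ :=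
  ∫ b, (∫ a, f (a, b) ∂(μ : Measure U)) ∂(ν : Measure V)

lemma dInt_mono {f g : U × V → ℝ} (hf : Continuous f) (hg : Continuous g)
    (h : ∀ p, f p ≤ g p) (μ : ProbabilityMeasure U) (ν : ProbabilityMeasure V) :
    dInt f μ ν ≤ dInt g μ ν := by
  refine integral_mono (myInt_outer f hf μ ν) (myInt_outer g hg μ ν) fun b => ?_
  exact integral_mono (myInt_inner f hf μ b) (myInt_inner g hg μ b) fun a => h (a, b)

lemma dInt_const (c : ℝ) (μ : ProbabilityMeasure U) (ν : ProbabilityMeasure V) :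
    dInt (fun _ => c) μ ν = c := by
  simp [dInt]

lemma dInt_nonneg {f : U × V → ℝ} (h : ∀ p, 0 ≤ f p) (μ : ProbabilityMeasure U)
    (ν : ProbabilityMeasure V) : 0 ≤ dInt f μ ν :=
  integral_nonneg fun b => integral_nonneg fun a => h (a, b)

lemma dInt_sum (F : Finset ℕ) (f : ℕ → U × V → ℝ) (hf : ∀ j, Continuous (f j))
    (μ : ProbabilityMeasure U) (ν : ProbabilityMeasure V) :
    dInt (fun p => ∑ j ∈ F, f j p) μ ν = ∑ j ∈ F, dInt (f j) μ ν := by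
  unfold dInt
  rw [show (fun b => ∫ a, ∑ j ∈ F, f j (a, b) ∂(μ : Measure U))
      = fun b => ∑ j ∈ F, ∫ a, f j (a, b) ∂(μ : Measure U) from
    funext fun b => integral_finset_sum F fun j _ => myInt_inner (f j) (hf j) μ b]
  exact integral_finset_sum F fun j _ => myInt_outer (f j) (hf j) μ ν

lemma dInt_mul_right (f : U × V → ℝ) (c : ℝ) (μ : ProbabilityMeasure U)
    (ν : ProbabilityMeasure V) :
    dInt (fun p => f p * c) μ ν = dInt f μ ν * c := by
  unfold dInt
  simp_rw [integral_mul_const]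

end DIntHelpers

/-- Proposition 2: the iterates `u_0 = ψ₂`, `u_n = T u_(n-1)` converge pointwise to a
limit `u* ∈ B_W(S)` with `ψ₂ ≤ u* ≤ ψ₁` and `‖u*‖_W ≤ M`. -/
theorem stmt14 {U V : Type} [MetricSpace U] [CompactSpace U] [Nonempty U]
    [MeasurableSpace U] [BorelSpace U]
    [MetricSpace V] [CompactSpace V] [Nonempty V]
    [MeasurableSpace V] [BorelSpace V]
    (q : ℕ → ℕ → U → V → ℝ) (r : ℕ → U → V → ℝ) (qb : ℕ → ℝ)
    (N : ℕ) (w : ℕ → ℕ → ℝ) (c : ℝ) (W : ℕ → ℝ) (M : ℝ) (α : ℝ) (ψ₁ ψ₂ : ℕ → ℝ)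
    (hrate : RateHyps q qb) (hA1 : A1Hyps q qb N w c W)
    (hA2 : A2Hyps q r W M) (hψ : PsiHyps ψ₁ ψ₂ W M) (hα : 0 < α) :
    ∀ u : ℕ → ℕ → ℝ, u 0 = ψ₂ → (∀ n, u (n + 1) = Tmap q r qb α ψ₁ ψ₂ (u n)) →
      ∃ ustar : ℕ → ℝ,
        (∀ i, Tendsto (fun n => u n i) atTop (𝓝 (ustar i))) ∧
        ustar ∈ BW W ∧
        (∀ i, ψ₂ i ≤ ustar i ∧ ustar i ≤ ψ₁ i) ∧
        normW W ustar ≤ M := by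
  intro u hu0 hrec
  haveI hPU : Nonempty (ProbabilityMeasure U) :=
    ⟨⟨MeasureTheory.Measure.dirac (Classical.arbitrary U), inferInstance⟩⟩
  haveI hPV : Nonempty (ProbabilityMeasure V) :=
    ⟨⟨MeasureTheory.Measure.dirac (Classical.arbitrary V), inferInstance⟩⟩
  have hWpos := hA1.W_pos
  have hW0 : ∀ i, 0 ≤ W i := fun i => (hWpos i).le
  have hM : 0 ≤ M := by
    have h1 : (0:ℝ) < M * W 0 := lt_of_le_of_lt (hψ.ψ₂_nonneg 0)
      (lt_of_lt_of_le (hψ.ψ₂_lt_ψ₁ 0) (hψ.ψ₁_le 0))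
    nlinarith [hWpos 0]
  have hψ₁0 : ∀ i, 0 ≤ ψ₁ i := fun i => le_of_lt
    (lt_of_le_of_lt (hψ.ψ₂_nonneg i) (hψ.ψ₂_lt_ψ₁ i))
  -- nonnegativity of qb
  have hqb0 : ∀ i, 0 ≤ qb i := by
    intro i
    have h := (hrate.stable i).1 (Set.mem_range_self (Classical.arbitrary (U × V)))
    refine le_trans (tsum_nonneg fun j => ?_) h
    by_cases hj : j = i
    · simp [hj]
    · simpa [hj] using hrate.off_nonneg i j _ _ hj
  -- diagonal bounds
  have hdiag : ∀ i a b, -(qb i) ≤ q i i a b ∧ q i i a b ≤ 0 := by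
    intro i a b
    have hs := hrate.summable i a b
    have h0 := hrate.conservative i a b
    have he := Summable.tsum_eq_add_tsum_ite hs i
    have hnn : 0 ≤ ∑' j, if j = i then (0:ℝ) else q i j a b :=
      tsum_nonneg fun j => by
        by_cases hj : j = i
        · simp [hj]
        · simpa [hj] using hrate.off_nonneg i j a b hj
    have hub : (∑' j, if j = i then (0:ℝ) else q i j a b) ≤ qb i :=
      (hrate.stable i).1 (Set.mem_range_self (a, b))
    have h2 : q i i a b + (∑' j, if j = i then (0:ℝ) else q i j a b) = 0 :=
      he.symm.trans h0
    constructor <;> linarith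
  -- summability of q * W
  have hqWsum : ∀ i a b, Summable fun j => q i j a b * W j := by
    intro i a b
    rw [show (fun j => q i j a b * W j)
        = fun j => ∑ n ∈ Finset.range N, q i j a b * w n j from
      funext fun j => by rw [hA1.W_def j, Finset.mul_sum]]
    exact summable_sum fun n hn => hA1.w_summable n (Finset.mem_range.mp hn) i a b
  obtain ⟨N', hN'⟩ : ∃ N', N = N' + 1 := ⟨N - 1, (Nat.succ_pred_eq_of_pos hA1.N_pos).symm⟩
  have hqWle : ∀ i a b, ∑' j, q i j a b * W j ≤ W i := by
    intro i a b
    have h1 : ∑' j, q i j a b * W j = ∑ n ∈ Finset.range N, ∑' j, q i j a b * w n j := by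
      rw [show (fun j => q i j a b * W j)
          = fun j => ∑ n ∈ Finset.range N, q i j a b * w n j from
        funext fun j => by rw [hA1.W_def j, Finset.mul_sum]]
      exact Summable.tsum_finsetSum fun n hn => hA1.w_summable n (Finset.mem_range.mp hn) i a b
    rw [h1, hN', Finset.sum_range_succ]
    have hlast : ∑' j, q i j a b * w N' j ≤ 0 := by
      have h2 := hA1.w_last i a b
      rw [hN'] at h2
      simpa using h2
    have hmid : ∑ n ∈ Finset.range N', ∑' j, q i j a b * w n j
        ≤ ∑ n ∈ Finset.range N', w (n + 1) i :=
      Finset.sum_le_sum fun n hn => hA1.w_rec n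
        (by have := Finset.mem_range.mp hn; omega) i a b
    have hWsplit : W i = (∑ n ∈ Finset.range N', w (n + 1) i) + w 0 i := by
      rw [hA1.W_def i, hN', Finset.sum_range_succ']
    linarith [hA1.w_nonneg 0 i]
  -- integrated rates as double integrals
  have hqTd : ∀ i j μ ν, qT q i j μ ν = dInt (fun p : U × V => q i j p.1 p.2) μ ν :=
    fun _ _ _ _ => rfl
  have hrTd : ∀ i μ ν, rT r i μ ν = dInt (fun p : U × V => r i p.1 p.2) μ ν :=
    fun _ _ _ => rfl
  have hqT_off : ∀ i j μ ν, j ≠ i → 0 ≤ qT q i j μ ν := fun i j μ ν hj => by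
    rw [hqTd]
    exact dInt_nonneg (fun p => hrate.off_nonneg i j p.1 p.2 hj) μ ν
  have hqT_diag_le : ∀ i μ ν, qT q i i μ ν ≤ 0 := fun i μ ν => by
    rw [hqTd]
    exact le_trans (dInt_mono (hA2.q_cont i i) continuous_const
      (fun p => (hdiag i p.1 p.2).2) μ ν) (le_of_eq (dInt_const 0 μ ν))
  have hqT_diag_ge : ∀ i μ ν, -(qb i) ≤ qT q i i μ ν := fun i μ ν => by
    rw [hqTd]
    exact le_trans (le_of_eq (dInt_const (-(qb i)) μ ν).symm)
      (dInt_mono continuous_const (hA2.q_cont i i) (fun p => (hdiag i p.1 p.2).1) μ ν)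
  have hrT0 : ∀ i μ ν, 0 ≤ rT r i μ ν := fun i μ ν => by
    rw [hrTd]
    exact dInt_nonneg (fun p => hA2.r_nonneg i p.1 p.2) μ ν
  have hrT_le : ∀ i μ ν, rT r i μ ν ≤ M * W i := fun i μ ν => by
    rw [hrTd]
    exact le_trans (dInt_mono (hA2.r_cont i) continuous_const
      (fun p => hA2.r_le i p.1 p.2) μ ν) (le_of_eq (dInt_const _ μ ν))
  have hqb1 : ∀ i, (0:ℝ) < qb i + 1 := fun i => by linarith [hqb0 i]
  have hpT0 : ∀ i j μ ν, 0 ≤ pT q qb i j μ ν := by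
    intro i j μ ν
    unfold pT
    by_cases hij : i = j
    · subst hij
      rw [if_pos rfl]
      have h1 := hqT_diag_ge i μ ν
      have h3 : (-1 : ℝ) ≤ qT q i i μ ν / (qb i + 1) := by
        rw [le_div_iff₀ (hqb1 i)]
        linarith
      linarith
    · simp only [if_neg hij, add_zero]
      exact div_nonneg (hqT_off i j μ ν (fun h => hij h.symm)) (hqb1 i).le
  -- summability of ite modification of q * W
  have hsum_ite : ∀ i a b, Summable fun j => if j = i then (0:ℝ) else q i j a b * W j := by
    intro i a b
    have h1 := hqWsum i a b
    have h2 : Summable fun j => if j = i then q i i a b * W i else (0:ℝ) :=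
      (hasSum_ite_eq i _).summable
    exact (h1.sub h2).congr fun j => by
      by_cases hj : j = i
      · subst hj; simp
      · simp [hj]
  -- pointwise finset bound
  have hpt_fin : ∀ i a b (F : Finset ℕ),
      ∑ j ∈ F, (if j = i then (0:ℝ) else q i j a b * W j) ≤ (1 + qb i) * W i := by
    intro i a b F
    have hnn : ∀ j, (0:ℝ) ≤ if j = i then (0:ℝ) else q i j a b * W j := by
      intro j
      by_cases hj : j = i
      · simp [hj]
      · simp only [if_neg hj]
        exact mul_nonneg (hrate.off_nonneg i j a b hj) (hW0 j)
    have h3 := Summable.sum_le_tsum F (fun j _ => hnn j) (hsum_ite i a b)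
    have h4 := Summable.tsum_eq_add_tsum_ite (hqWsum i a b) i
    have h5 := hqWle i a b
    have h7 : -(qb i) * W i ≤ q i i a b * W i :=
      mul_le_mul_of_nonneg_right (hdiag i a b).1 (hW0 i)
    have h8 : (1 + qb i) * W i = W i + qb i * W i := by ring
    linarith
  -- integrated finset bound
  have hqT_fin : ∀ i μ ν (F : Finset ℕ),
      ∑ j ∈ F, (if j = i then (0:ℝ) else qT q i j μ ν * W j) ≤ (1 + qb i) * W i := by
    intro i μ ν F
    have hc : ∀ j, Continuous fun p : U × V => if j = i then (0:ℝ) else q i j p.1 p.2 * W j := by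
      intro j
      by_cases hj : j = i
      · simp only [if_pos hj]; exact continuous_const
      · simp only [if_neg hj]; exact (hA2.q_cont i j).mul continuous_const
    have h1 : ∑ j ∈ F, (if j = i then (0:ℝ) else qT q i j μ ν * W j)
        = dInt (fun p => ∑ j ∈ F, if j = i then (0:ℝ) else q i j p.1 p.2 * W j) μ ν := by
      rw [dInt_sum F _ hc μ ν]
      refine Finset.sum_congr rfl fun j _ => ?_
      by_cases hj : j = i
      · simp only [if_pos hj]
        exact (dInt_const 0 μ ν).symm
      · simp only [if_neg hj]
        rw [hqTd i j μ ν]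
        exact (dInt_mul_right _ _ μ ν).symm
    rw [h1]
    exact le_trans (dInt_mono (continuous_finset_sum F fun j _ => hc j) continuous_const
      (fun p => hpt_fin i p.1 p.2 F) μ ν) (le_of_eq (dInt_const _ μ ν))
  -- key summability and bounds for ∑' pT * φ
  have hkey : ∀ (φ : ℕ → ℝ), (∀ j, 0 ≤ φ j ∧ φ j ≤ M * W j) → ∀ i μ ν,
      Summable (fun j => pT q qb i j μ ν * φ j) ∧
      0 ≤ (∑' j, pT q qb i j μ ν * φ j) ∧
      (∑' j, pT q qb i j μ ν * φ j) ≤ 2 * M * W i := by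
    intro φ hφ i μ ν
    have hnn : ∀ j, 0 ≤ pT q qb i j μ ν * φ j :=
      fun j => mul_nonneg (hpT0 i j μ ν) (hφ j).1
    have hfin : ∀ F : Finset ℕ,
        ∑ j ∈ F, pT q qb i j μ ν * φ j ≤ M * ((1 + qb i) * W i) / (qb i + 1) + φ i := by
      intro F
      have e1 : ∀ j, pT q qb i j μ ν * φ j
          = qT q i j μ ν * φ j / (qb i + 1) + (if i = j then φ j else 0) := by
        intro j
        by_cases hij : i = j
        · simp only [pT, if_pos hij]; ring
        · simp only [pT, if_neg hij]; ring
      have hterm : ∀ j ∈ F, qT q i j μ ν * φ j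
          ≤ M * (if j = i then (0:ℝ) else qT q i j μ ν * W j) := by
        intro j _
        by_cases hj : j = i
        · subst hj
          rw [if_pos rfl, mul_zero]
          have := hqT_diag_le j μ ν
          nlinarith [(hφ j).1]
        · simp only [if_neg hj]
          have h0 := hqT_off i j μ ν hj
          calc qT q i j μ ν * φ j ≤ qT q i j μ ν * (M * W j) :=
                mul_le_mul_of_nonneg_left (hφ j).2 h0
            _ = M * (qT q i j μ ν * W j) := by ring
      have hq1 : ∑ j ∈ F, qT q i j μ ν * φ j ≤ M * ((1 + qb i) * W i) := by
        refine le_trans (Finset.sum_le_sum hterm) ?_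
        rw [← Finset.mul_sum]
        exact mul_le_mul_of_nonneg_left (hqT_fin i μ ν F) hM
      have hq2 : (∑ j ∈ F, qT q i j μ ν * φ j) / (qb i + 1)
          ≤ M * ((1 + qb i) * W i) / (qb i + 1) := by
        rw [div_eq_mul_inv, div_eq_mul_inv]
        exact mul_le_mul_of_nonneg_right hq1 (inv_nonneg.mpr (hqb1 i).le)
      have hi2 : ∑ j ∈ F, (if i = j then φ j else 0) ≤ φ i := by
        rw [Finset.sum_ite_eq]
        split
        · exact le_rfl
        · exact (hφ i).1
      calc ∑ j ∈ F, pT q qb i j μ ν * φ j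
          = ∑ j ∈ F, (qT q i j μ ν * φ j / (qb i + 1) + (if i = j then φ j else 0)) :=
            Finset.sum_congr rfl fun j _ => e1 j
        _ = (∑ j ∈ F, qT q i j μ ν * φ j) / (qb i + 1)
              + ∑ j ∈ F, (if i = j then φ j else 0) := by
            rw [Finset.sum_add_distrib, Finset.sum_div]
        _ ≤ M * ((1 + qb i) * W i) / (qb i + 1) + φ i := add_le_add hq2 hi2
    have hsm : Summable (fun j => pT q qb i j μ ν * φ j) :=
      summable_of_sum_le (fun j => hnn j) hfin
    refine ⟨hsm, tsum_nonneg hnn, ?_⟩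
    have hb := Summable.tsum_le_of_sum_le hsm hfin
    have he : M * ((1 + qb i) * W i) / (qb i + 1) = M * W i := by
      rw [div_eq_iff (ne_of_gt (hqb1 i))]
      ring
    have := (hφ i).2
    linarith [hb, he ▸ hb]
  -- bounds on the inner expression of Iop
  have hEle : ∀ (φ : ℕ → ℝ), (∀ j, 0 ≤ φ j ∧ φ j ≤ M * W j) → ∀ i μ ν,
      0 ≤ rT r i μ ν / (α + qb i + 1)
          + ((qb i + 1) / (α + qb i + 1)) * ∑' j, pT q qb i j μ ν * φ j ∧
      rT r i μ ν / (α + qb i + 1)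
          + ((qb i + 1) / (α + qb i + 1)) * ∑' j, pT q qb i j μ ν * φ j
        ≤ M * W i + 2 * M * W i := by
    intro φ hφ i μ ν
    have hd : (0:ℝ) < α + qb i + 1 := by linarith [hqb0 i]
    obtain ⟨hsm, h0, h2⟩ := hkey φ hφ i μ ν
    have hfac0 : 0 ≤ (qb i + 1) / (α + qb i + 1) := div_nonneg (hqb1 i).le hd.le
    constructor
    · exact add_nonneg (div_nonneg (hrT0 i μ ν) hd.le) (mul_nonneg hfac0 h0)
    · have hr1 : rT r i μ ν / (α + qb i + 1) ≤ M * W i := by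
        have h1le : (1:ℝ) ≤ α + qb i + 1 := by linarith [hqb0 i]
        exact le_trans (div_le_self (hrT0 i μ ν) h1le) (hrT_le i μ ν)
      have hfac : (qb i + 1) / (α + qb i + 1) ≤ 1 := by
        rw [div_le_one hd]; linarith
      have h3 : ((qb i + 1) / (α + qb i + 1)) * ∑' j, pT q qb i j μ ν * φ j
          ≤ 2 * M * W i := by
        calc ((qb i + 1) / (α + qb i + 1)) * ∑' j, pT q qb i j μ ν * φ j
            ≤ 1 * (2 * M * W i) := mul_le_mul hfac h2 h0 zero_le_one
          _ = 2 * M * W i := one_mul _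
      linarith
  -- monotonicity of Iop on the order interval [0, M • W]
  have hIop_mono : ∀ (φ φ' : ℕ → ℝ), (∀ j, 0 ≤ φ j ∧ φ j ≤ M * W j) →
      (∀ j, 0 ≤ φ' j ∧ φ' j ≤ M * W j) → (∀ j, φ j ≤ φ' j) →
      ∀ i, Iop q r qb α φ i ≤ Iop q r qb α φ' i := by
    intro φ φ' hφ hφ' hle i
    have hd : (0:ℝ) < α + qb i + 1 := by linarith [hqb0 i]
    unfold Iop
    refine ciInf_mono ⟨0, ?_⟩ (fun μ => ciSup_mono ⟨M * W i + 2 * M * W i, ?_⟩ fun ν => ?_)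
    · rintro x ⟨μ, rfl⟩
      have hba : BddAbove (Set.range fun ν : ProbabilityMeasure V =>
          rT r i μ ν / (α + qb i + 1)
            + ((qb i + 1) / (α + qb i + 1)) * ∑' j, pT q qb i j μ ν * φ j) :=
        ⟨M * W i + 2 * M * W i, by rintro y ⟨ν, rfl⟩; exact (hEle φ hφ i μ ν).2⟩
      exact le_trans (hEle φ hφ i μ (Classical.arbitrary _)).1 (le_ciSup hba _)
    · rintro y ⟨ν, rfl⟩
      exact (hEle φ' hφ' i μ ν).2
    · refine add_le_add le_rfl (mul_le_mul_of_nonneg_left ?_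
        (div_nonneg (hqb1 i).le hd.le))
      exact Summable.tsum_le_tsum (fun j => mul_le_mul_of_nonneg_left (hle j) (hpT0 i j μ ν))
        (hkey φ hφ i μ ν).1 (hkey φ' hφ' i μ ν).1
  -- properties of the iterates
  have hGood : ∀ n, ∀ j, 0 ≤ u n j ∧ u n j ≤ M * W j := by
    intro n
    induction n with
    | zero =>
      intro j
      rw [hu0]
      exact ⟨hψ.ψ₂_nonneg j, le_trans (hψ.ψ₂_lt_ψ₁ j).le (hψ.ψ₁_le j)⟩
    | succ n ih =>
      intro j
      rw [hrec n]
      unfold Tmap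
      exact ⟨le_min (le_trans (hψ.ψ₂_nonneg j) (le_max_right _ _)) (hψ₁0 j),
        le_trans (min_le_right _ _) (hψ.ψ₁_le j)⟩
  have hub : ∀ n j, u n j ≤ ψ₁ j := by
    intro n j
    cases n with
    | zero => rw [hu0]; exact (hψ.ψ₂_lt_ψ₁ j).le
    | succ n => rw [hrec n]; exact min_le_right _ _
  have hmono : ∀ n j, u n j ≤ u (n + 1) j := by
    intro n
    induction n with
    | zero =>
      intro j
      rw [hrec 0, hu0]
      unfold Tmap
      exact le_min (le_max_right _ _) (hψ.ψ₂_lt_ψ₁ j).le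
    | succ n ih =>
      intro j
      rw [hrec (n + 1)]
      conv_lhs => rw [hrec n]
      unfold Tmap
      exact min_le_min (max_le_max
        (hIop_mono (u n) (u (n + 1)) (hGood n) (hGood (n + 1)) ih j) le_rfl) le_rfl
  -- the limit
  have hbddi : ∀ i, BddAbove (Set.range fun n => u n i) := fun i =>
    ⟨ψ₁ i, by rintro x ⟨n, rfl⟩; exact hub n i⟩
  have hmon : ∀ i, Monotone fun n => u n i := fun i =>
    monotone_nat_of_le_succ fun n => hmono n i
  have hstar_le : ∀ i, (⨆ n, u n i) ≤ ψ₁ i := fun i => ciSup_le fun n => hub n i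
  have hstar_ge : ∀ i, ψ₂ i ≤ ⨆ n, u n i := fun i => by
    have h := le_ciSup (hbddi i) 0
    rw [hu0] at h
    exact h
  refine ⟨fun i => ⨆ n, u n i,
    fun i => tendsto_atTop_ciSup (hmon i) (hbddi i),
    ⟨fun i => le_trans (hψ.ψ₂_nonneg i) (hstar_ge i), ⟨M, ?_⟩⟩,
    fun i => ⟨hstar_ge i, hstar_le i⟩, ?_⟩
  · rintro x ⟨i, rfl⟩
    simp only
    rw [div_le_iff₀ (hWpos i)]
    exact (hstar_le i).trans (hψ.ψ₁_le i)
  · unfold normW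
    refine ciSup_le fun i => ?_
    rw [div_le_iff₀ (hWpos i)]
    exact (hstar_le i).trans (hψ.ψ₁_le i)
end

section
/- Under (A1) and (A2), the pointwise limit u* of the iterates u_0 := ψ_2, u_n := T u_{n−1} satisfies T u*(i) ≥ u*(i) for all i ∈ S. -/
open MeasureTheory Filter Topology

set_option linter.unusedSectionVars false
set_option maxHeartbeats 1000000

/- ### integration helpers -/
section Helpers
variable {U V : Type} [MetricSpace U] [CompactSpace U] [Nonempty U]
    [MeasurableSpace U] [BorelSpace U]
    [MetricSpace V] [CompactSpace V] [Nonempty V]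
    [MeasurableSpace V] [BorelSpace V]

lemma cont_bound {f : U → V → ℝ} (hf : Continuous fun ab : U × V => f ab.1 ab.2) :
    ∃ C : ℝ, ∀ a b, ‖f a b‖ ≤ C := by
  obtain ⟨p, hp⟩ := hf.norm.exists_forall_ge (by simp [Filter.cocompact_eq_bot])
  exact ⟨‖f p.1 p.2‖, fun a b => hp (a, b)⟩

lemma integ_inner {f : U → V → ℝ} (hf : Continuous fun ab : U × V => f ab.1 ab.2)
    (μ : ProbabilityMeasure U) (b : V) : Integrable (fun a => f a b) (μ : Measure U) :=
  (hf.comp (continuous_id.prodMk continuous_const)).integrable_of_hasCompactSupport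
    (HasCompactSupport.of_compactSpace _)

lemma integ_outer {f : U → V → ℝ} (hf : Continuous fun ab : U × V => f ab.1 ab.2)
    (μ : ProbabilityMeasure U) (ν : ProbabilityMeasure V) :
    Integrable (fun b => ∫ a, f a b ∂(μ : Measure U)) (ν : Measure V) := by
  obtain ⟨C, hC⟩ := cont_bound hf
  have hm : AEStronglyMeasurable (fun b => ∫ a, f a b ∂(μ : Measure U)) (ν : Measure V) := by
    have hsm : StronglyMeasurable fun p : V × U => f p.2 p.1 :=
      (hf.comp continuous_swap).stronglyMeasurable
    exact hsm.integral_prod_right'.aestronglyMeasurable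
  refine (integrable_const C).mono' hm (Filter.Eventually.of_forall fun b => ?_)
  calc ‖∫ a, f a b ∂(μ : Measure U)‖ ≤ C * ((μ : Measure U) Set.univ).toReal :=
        norm_integral_le_of_norm_le_const (Filter.Eventually.of_forall fun a => hC a b)
    _ = C := by simp

lemma iint_nonneg {f : U → V → ℝ} (hf : ∀ a b, 0 ≤ f a b)
    (μ : ProbabilityMeasure U) (ν : ProbabilityMeasure V) :
    0 ≤ ∫ b, ∫ a, f a b ∂(μ : Measure U) ∂(ν : Measure V) :=
  integral_nonneg fun b => integral_nonneg fun a => hf a b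

lemma iint_le_const {f : U → V → ℝ} (hf : Continuous fun ab : U × V => f ab.1 ab.2)
    {C : ℝ} (hC : ∀ a b, f a b ≤ C)
    (μ : ProbabilityMeasure U) (ν : ProbabilityMeasure V) :
    ∫ b, ∫ a, f a b ∂(μ : Measure U) ∂(ν : Measure V) ≤ C := by
  have h1 : ∀ b, ∫ a, f a b ∂(μ : Measure U) ≤ C := by
    intro b
    calc ∫ a, f a b ∂(μ : Measure U) ≤ ∫ _, C ∂(μ : Measure U) :=
          integral_mono (integ_inner hf μ b) (integrable_const C) fun a => hC a b
      _ = C := by simp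
  calc ∫ b, ∫ a, f a b ∂(μ : Measure U) ∂(ν : Measure V) ≤ ∫ _, C ∂(ν : Measure V) :=
        integral_mono (integ_outer hf μ ν) (integrable_const C) h1
    _ = C := by simp

lemma const_le_iint {f : U → V → ℝ} (hf : Continuous fun ab : U × V => f ab.1 ab.2)
    {C : ℝ} (hC : ∀ a b, C ≤ f a b)
    (μ : ProbabilityMeasure U) (ν : ProbabilityMeasure V) :
    C ≤ ∫ b, ∫ a, f a b ∂(μ : Measure U) ∂(ν : Measure V) := by
  have := iint_le_const (f := fun a b => -f a b) (by fun_prop) (C := -C)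
    (fun a b => neg_le_neg (hC a b)) μ ν
  simp only [integral_neg] at this
  linarith

lemma iint_finset_sum {g : ℕ → U → V → ℝ}
    (hg : ∀ j, Continuous fun ab : U × V => g j ab.1 ab.2) (s : Finset ℕ)
    (μ : ProbabilityMeasure U) (ν : ProbabilityMeasure V) :
    ∑ j ∈ s, ∫ b, ∫ a, g j a b ∂(μ : Measure U) ∂(ν : Measure V)
      = ∫ b, ∫ a, ∑ j ∈ s, g j a b ∂(μ : Measure U) ∂(ν : Measure V) := by
  rw [← integral_finset_sum s (fun j _ => integ_outer (hg j) μ ν)]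
  refine integral_congr_ae (Filter.Eventually.of_forall fun b => ?_)
  exact (integral_finset_sum s (fun j _ => integ_inner (hg j) μ b)).symm

lemma iint_mul_const {f : U → V → ℝ} (r : ℝ)
    (μ : ProbabilityMeasure U) (ν : ProbabilityMeasure V) :
    ∫ b, ∫ a, f a b * r ∂(μ : Measure U) ∂(ν : Measure V)
      = (∫ b, ∫ a, f a b ∂(μ : Measure U) ∂(ν : Measure V)) * r := by
  simp only [integral_mul_const]

end Helpers

/- ### rate facts -/
section QFacts
variable {U V : Type} [MetricSpace U] [CompactSpace U] [Nonempty U]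
    [MeasurableSpace U] [BorelSpace U]
    [MetricSpace V] [CompactSpace V] [Nonempty V]
    [MeasurableSpace V] [BorelSpace V]
    {q : ℕ → ℕ → U → V → ℝ} {r : ℕ → U → V → ℝ} {qb : ℕ → ℝ} {N : ℕ}
    {w : ℕ → ℕ → ℝ} {c : ℝ} {W : ℕ → ℝ} {M : ℝ}

lemma offdiag_nonneg (hrate : RateHyps q qb) (i : ℕ) (a : U) (b : V) (j : ℕ) :
    0 ≤ if j = i then (0 : ℝ) else q i j a b := by
  by_cases h : j = i
  · simp [h]
  · simpa [h] using hrate.off_nonneg i j a b h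

lemma offdiag_le_qb (hrate : RateHyps q qb) (i : ℕ) (a : U) (b : V) :
    ∑' j, (if j = i then (0 : ℝ) else q i j a b) ≤ qb i :=
  (hrate.stable i).1 (Set.mem_range_self ((a, b) : U × V))

lemma qb_nonneg (hrate : RateHyps q qb) (i : ℕ) : 0 ≤ qb i := by
  have a := Classical.arbitrary U
  have b := Classical.arbitrary V
  exact le_trans (tsum_nonneg (offdiag_nonneg hrate i a b)) (offdiag_le_qb hrate i a b)

lemma q_diag_eq (hrate : RateHyps q qb) (i : ℕ) (a : U) (b : V) :
    q i i a b = -∑' j, (if j = i then (0 : ℝ) else q i j a b) := by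
  have h := Summable.tsum_eq_add_tsum_ite (hrate.summable i a b) i
  rw [hrate.conservative i a b] at h
  linarith

lemma q_diag_nonpos (hrate : RateHyps q qb) (i : ℕ) (a : U) (b : V) : q i i a b ≤ 0 := by
  rw [q_diag_eq hrate i a b]
  simpa using tsum_nonneg (offdiag_nonneg hrate i a b)

lemma neg_q_diag_le (hrate : RateHyps q qb) (i : ℕ) (a : U) (b : V) : -q i i a b ≤ qb i := by
  rw [q_diag_eq hrate i a b, neg_neg]
  exact offdiag_le_qb hrate i a b

lemma qW_summable (hA1 : A1Hyps q qb N w c W) (i : ℕ) (a : U) (b : V) :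
    Summable fun j => q i j a b * W j := by
  have heq : (fun j => q i j a b * W j)
      = fun j => ∑ n ∈ Finset.range N, q i j a b * w n j := by
    funext j; rw [hA1.W_def j, Finset.mul_sum]
  rw [heq]
  exact summable_sum fun n hn => hA1.w_summable n (Finset.mem_range.mp hn) i a b

lemma tsum_qW_le (hA1 : A1Hyps q qb N w c W) (i : ℕ) (a : U) (b : V) :
    ∑' j, q i j a b * W j ≤ W i := by
  have hsum : ∀ n ∈ Finset.range N, Summable fun j => q i j a b * w n j := fun n hn =>
    hA1.w_summable n (Finset.mem_range.mp hn) i a b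
  have heq : (fun j => q i j a b * W j)
      = fun j => ∑ n ∈ Finset.range N, q i j a b * w n j := by
    funext j; rw [hA1.W_def j, Finset.mul_sum]
  rw [heq, Summable.tsum_finsetSum hsum]
  have hle : ∀ n ∈ Finset.range N,
      ∑' j, q i j a b * w n j ≤ (if n + 1 < N then w (n + 1) i else 0) := by
    intro n hn
    rw [Finset.mem_range] at hn
    by_cases h : n + 1 < N
    · simpa [h] using hA1.w_rec n h i a b
    · have hn' : n = N - 1 := by omega
      simp only [h, if_false]
      rw [hn']
      exact hA1.w_last i a b
  calc ∑ n ∈ Finset.range N, ∑' j, q i j a b * w n j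
      ≤ ∑ n ∈ Finset.range N, (if n + 1 < N then w (n + 1) i else 0) :=
        Finset.sum_le_sum hle
    _ = ∑ n ∈ Finset.range (N - 1), (if n + 1 < N then w (n + 1) i else 0) := by
        refine (Finset.sum_subset (Finset.range_subset_range.mpr (by omega)) ?_).symm
        intro x hx hx'
        rw [Finset.mem_range] at hx
        rw [Finset.mem_range] at hx'
        have : ¬ x + 1 < N := by omega
        simp [this]
    _ = ∑ n ∈ Finset.range (N - 1), w (n + 1) i := by
        refine Finset.sum_congr rfl fun n hn => ?_
        rw [Finset.mem_range] at hn
        have : n + 1 < N := by omega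
        simp [this]
    _ ≤ W i := by
        rw [hA1.W_def i]
        obtain ⟨K, hK⟩ : ∃ K, N = K + 1 := ⟨N - 1, by have := hA1.N_pos; omega⟩
        subst hK
        simp only [Nat.add_sub_cancel]
        rw [Finset.sum_range_succ' (fun n => w n i) K]
        have h0 : 0 ≤ w 0 i := hA1.w_nonneg 0 i
        linarith

lemma qWoff_summable (hrate : RateHyps q qb) (hA1 : A1Hyps q qb N w c W)
    (i : ℕ) (a : U) (b : V) :
    Summable fun j => (if j = i then (0 : ℝ) else q i j a b * W j) := by
  refine Summable.of_norm_bounded (qW_summable hA1 i a b).abs fun j => ?_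
  by_cases h : j = i
  · simp [h]; positivity
  · simp only [h, if_false, Real.norm_eq_abs, abs_mul, le_refl]

lemma qWoff_nonneg (hrate : RateHyps q qb) (hA1 : A1Hyps q qb N w c W)
    (i : ℕ) (a : U) (b : V) (j : ℕ) :
    0 ≤ (if j = i then (0 : ℝ) else q i j a b * W j) := by
  by_cases h : j = i
  · simp [h]
  · simpa [h] using mul_nonneg (hrate.off_nonneg i j a b h) (hA1.W_pos j).le

lemma tsum_qWoff_le (hrate : RateHyps q qb) (hA1 : A1Hyps q qb N w c W)
    (i : ℕ) (a : U) (b : V) :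
    ∑' j, (if j = i then (0 : ℝ) else q i j a b * W j) ≤ (1 + qb i) * W i := by
  have h := Summable.tsum_eq_add_tsum_ite (qW_summable hA1 i a b) i
  have h2 : -q i i a b * W i ≤ qb i * W i :=
    mul_le_mul_of_nonneg_right (neg_q_diag_le hrate i a b) (hA1.W_pos i).le
  have h3 := tsum_qW_le hA1 i a b
  nlinarith [hA1.W_pos i]

lemma sum_qWoff_le (hrate : RateHyps q qb) (hA1 : A1Hyps q qb N w c W)
    (i : ℕ) (a : U) (b : V) (s : Finset ℕ) (hi : i ∉ s) :
    ∑ j ∈ s, q i j a b * W j ≤ (1 + qb i) * W i := by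
  have heq : ∑ j ∈ s, q i j a b * W j
      = ∑ j ∈ s, (if j = i then (0 : ℝ) else q i j a b * W j) := by
    refine Finset.sum_congr rfl fun j hj => ?_
    have : j ≠ i := fun h => hi (h ▸ hj)
    simp [this]
  rw [heq]
  exact le_trans (Summable.sum_le_tsum s (fun j _ => qWoff_nonneg hrate hA1 i a b j)
    (qWoff_summable hrate hA1 i a b)) (tsum_qWoff_le hrate hA1 i a b)

/- ### integrated rate facts -/
variable [MeasurableSpace U] [BorelSpace U] [MeasurableSpace V] [BorelSpace V]

lemma qT_offdiag_nonneg (hrate : RateHyps q qb)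
    {i j : ℕ} (hj : j ≠ i) (μ : ProbabilityMeasure U) (ν : ProbabilityMeasure V) :
    0 ≤ qT q i j μ ν :=
  iint_nonneg (fun a b => hrate.off_nonneg i j a b hj) μ ν

lemma qT_diag_nonpos (hrate : RateHyps q qb) (hA2 : A2Hyps q r W M)
    (i : ℕ) (μ : ProbabilityMeasure U) (ν : ProbabilityMeasure V) :
    qT q i i μ ν ≤ 0 :=
  iint_le_const (hA2.q_cont i i) (q_diag_nonpos hrate i) μ ν

lemma qT_diag_ge (hrate : RateHyps q qb) (hA2 : A2Hyps q r W M)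
    (i : ℕ) (μ : ProbabilityMeasure U) (ν : ProbabilityMeasure V) :
    -qb i ≤ qT q i i μ ν :=
  const_le_iint (hA2.q_cont i i)
    (fun a b => by linarith [neg_q_diag_le hrate i a b]) μ ν

lemma qTWoff_facts (hrate : RateHyps q qb) (hA1 : A1Hyps q qb N w c W)
    (hA2 : A2Hyps q r W M) (i : ℕ)
    (μ : ProbabilityMeasure U) (ν : ProbabilityMeasure V) :
    Summable (fun j => if j = i then (0 : ℝ) else qT q i j μ ν * W j) ∧
    ∑' j, (if j = i then (0 : ℝ) else qT q i j μ ν * W j) ≤ (1 + qb i) * W i := by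
  set g : ℕ → ℝ := fun j => if j = i then (0 : ℝ) else qT q i j μ ν * W j with hg
  have hg0 : ∀ j, 0 ≤ g j := by
    intro j
    by_cases h : j = i
    · simp [hg, h]
    · simpa [hg, h] using mul_nonneg (qT_offdiag_nonneg hrate h μ ν) (hA1.W_pos j).le
  have hb : ∀ s : Finset ℕ, ∑ j ∈ s, g j ≤ (1 + qb i) * W i := by
    intro s
    have h1 : ∑ j ∈ s, g j = ∑ j ∈ s.erase i, qT q i j μ ν * W j := by
      rw [← Finset.sum_erase (f := g) (a := i) s (by simp [hg])]
      refine Finset.sum_congr rfl fun j hj => ?_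
      have := Finset.ne_of_mem_erase hj
      simp [hg, this]
    have h2 : ∑ j ∈ s.erase i, qT q i j μ ν * W j
        = ∫ b, ∫ a, (∑ j ∈ s.erase i, q i j a b * W j) ∂(μ : Measure U) ∂(ν : Measure V) := by
      rw [← iint_finset_sum (fun j => (hA2.q_cont i j).mul continuous_const) (s.erase i) μ ν]
      refine Finset.sum_congr rfl fun j hj => ?_
      rw [qT, ← iint_mul_const]
    rw [h1, h2]
    exact iint_le_const (continuous_finset_sum _ fun j _ =>
        (hA2.q_cont i j).mul continuous_const)
      (fun a b => sum_qWoff_le hrate hA1 i a b (s.erase i) (Finset.notMem_erase i s)) μ ν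
  have hs : Summable g := summable_of_sum_le hg0 hb
  exact ⟨hs, Summable.tsum_le_of_sum_le hs hb⟩

lemma qTW_summable (hrate : RateHyps q qb) (hA1 : A1Hyps q qb N w c W)
    (hA2 : A2Hyps q r W M) (i : ℕ)
    (μ : ProbabilityMeasure U) (ν : ProbabilityMeasure V) :
    Summable fun j => qT q i j μ ν * W j := by
  have heq : (fun j => qT q i j μ ν * W j)
      = fun j => (if j = i then (0 : ℝ) else qT q i j μ ν * W j)
          + (if j = i then qT q i i μ ν * W i else 0) := by
    funext j
    by_cases h : j = i <;> simp [h]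
  rw [heq]
  exact ((qTWoff_facts hrate hA1 hA2 i μ ν).1).add
    (summable_of_ne_finset_zero (s := {i}) fun j hj => by
      simp only [Finset.mem_singleton] at hj; simp [hj])

lemma tsum_qTW_le (hrate : RateHyps q qb) (hA1 : A1Hyps q qb N w c W)
    (hA2 : A2Hyps q r W M) (i : ℕ)
    (μ : ProbabilityMeasure U) (ν : ProbabilityMeasure V) :
    ∑' j, qT q i j μ ν * W j ≤ (1 + qb i) * W i := by
  have h := Summable.tsum_eq_add_tsum_ite (qTW_summable hrate hA1 hA2 i μ ν) i
  have h2 := (qTWoff_facts hrate hA1 hA2 i μ ν).2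
  have h3 : qT q i i μ ν * W i ≤ 0 :=
    mul_nonpos_of_nonpos_of_nonneg (qT_diag_nonpos hrate hA2 i μ ν) (hA1.W_pos i).le
  have heq : ∑' j, (if j = i then (0:ℝ) else qT q i j μ ν * W j)
      ≤ (1 + qb i) * W i := h2
  linarith

lemma pT_nonneg (hrate : RateHyps q qb) (hA2 : A2Hyps q r W M)
    (i j : ℕ) (μ : ProbabilityMeasure U) (ν : ProbabilityMeasure V) :
    0 ≤ pT q qb i j μ ν := by
  have hk : 0 ≤ qb i := qb_nonneg hrate i
  have hk1 : (0 : ℝ) < qb i + 1 := by linarith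
  by_cases h : j = i
  · subst h
    have h1 := qT_diag_ge hrate hA2 j μ ν
    simp only [pT, if_pos rfl, if_true]
    have h2 : -(qb j + 1) / (qb j + 1) ≤ qT q j j μ ν / (qb j + 1) := by
      gcongr
      linarith
    have h3 : -(qb j + 1) / (qb j + 1) = -1 := by
      field_simp
    linarith
  · have h0 := qT_offdiag_nonneg hrate h μ ν
    have hne : ¬ i = j := fun hh => h hh.symm
    rw [pT, if_neg hne, add_zero]
    exact div_nonneg h0 hk1.le

lemma pTW_summable (hrate : RateHyps q qb) (hA1 : A1Hyps q qb N w c W)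
    (hA2 : A2Hyps q r W M) (i : ℕ)
    (μ : ProbabilityMeasure U) (ν : ProbabilityMeasure V) :
    Summable fun j => pT q qb i j μ ν * W j := by
  have heq : (fun j => pT q qb i j μ ν * W j)
      = fun j => qT q i j μ ν * W j / (qb i + 1) + (if j = i then W i else 0) := by
    funext j
    by_cases h : j = i <;>
      simp [pT, h, eq_comm (a := i) (b := j)] <;> ring
  rw [heq]
  exact ((qTW_summable hrate hA1 hA2 i μ ν).div_const _).add
    (summable_of_ne_finset_zero (s := {i}) fun j hj => by
      simp only [Finset.mem_singleton] at hj; simp [hj])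

lemma tsum_pTW_le (hrate : RateHyps q qb) (hA1 : A1Hyps q qb N w c W)
    (hA2 : A2Hyps q r W M) (i : ℕ)
    (μ : ProbabilityMeasure U) (ν : ProbabilityMeasure V) :
    ∑' j, pT q qb i j μ ν * W j ≤ 2 * W i := by
  have hk : 0 ≤ qb i := qb_nonneg hrate i
  have hk1 : (0 : ℝ) < qb i + 1 := by linarith
  have heq : (fun j => pT q qb i j μ ν * W j)
      = fun j => qT q i j μ ν * W j / (qb i + 1) + (if j = i then W i else 0) := by
    funext j
    by_cases h : j = i <;>
      simp [pT, h, eq_comm (a := i) (b := j)] <;> ring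
  rw [heq, Summable.tsum_add ((qTW_summable hrate hA1 hA2 i μ ν).div_const _)
    (summable_of_ne_finset_zero (s := {i}) fun j hj => by
      simp only [Finset.mem_singleton] at hj; simp [hj]),
    tsum_div_const, tsum_ite_eq]
  have h1 : (∑' j, qT q i j μ ν * W j) / (qb i + 1) ≤ ((1 + qb i) * W i) / (qb i + 1) := by
    gcongr
    exact tsum_qTW_le hrate hA1 hA2 i μ ν
  have h2 : ((1 + qb i) * W i) / (qb i + 1) = W i := by
    field_simp
    ring
  linarith

lemma pTphi_summable (hrate : RateHyps q qb) (hA1 : A1Hyps q qb N w c W)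
    (hA2 : A2Hyps q r W M) (hM : 0 ≤ M) (i : ℕ)
    (μ : ProbabilityMeasure U) (ν : ProbabilityMeasure V)
    {φ : ℕ → ℝ} (hφ0 : ∀ j, 0 ≤ φ j) (hφM : ∀ j, φ j ≤ M * W j) :
    Summable fun j => pT q qb i j μ ν * φ j := by
  refine Summable.of_nonneg_of_le
    (fun j => mul_nonneg (pT_nonneg hrate hA2 i j μ ν) (hφ0 j))
    (fun j => ?_) ((pTW_summable hrate hA1 hA2 i μ ν).mul_left M)
  calc pT q qb i j μ ν * φ j ≤ pT q qb i j μ ν * (M * W j) :=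
        mul_le_mul_of_nonneg_left (hφM j) (pT_nonneg hrate hA2 i j μ ν)
    _ = M * (pT q qb i j μ ν * W j) := by ring

lemma tsum_pTphi_le (hrate : RateHyps q qb) (hA1 : A1Hyps q qb N w c W)
    (hA2 : A2Hyps q r W M) (hM : 0 ≤ M) (i : ℕ)
    (μ : ProbabilityMeasure U) (ν : ProbabilityMeasure V)
    {φ : ℕ → ℝ} (hφ0 : ∀ j, 0 ≤ φ j) (hφM : ∀ j, φ j ≤ M * W j) :
    ∑' j, pT q qb i j μ ν * φ j ≤ M * (2 * W i) := by
  have h1 : ∑' j, pT q qb i j μ ν * φ j ≤ ∑' j, M * (pT q qb i j μ ν * W j) := by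
    refine Summable.tsum_le_tsum (fun j => ?_)
      (pTphi_summable hrate hA1 hA2 hM i μ ν hφ0 hφM)
      ((pTW_summable hrate hA1 hA2 i μ ν).mul_left M)
    calc pT q qb i j μ ν * φ j ≤ pT q qb i j μ ν * (M * W j) :=
          mul_le_mul_of_nonneg_left (hφM j) (pT_nonneg hrate hA2 i j μ ν)
      _ = M * (pT q qb i j μ ν * W j) := by ring
  rw [tsum_mul_left] at h1
  exact le_trans h1 (mul_le_mul_of_nonneg_left (tsum_pTW_le hrate hA1 hA2 i μ ν) hM)

lemma rT_nonneg (hA2 : A2Hyps q r W M) (i : ℕ)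
    (μ : ProbabilityMeasure U) (ν : ProbabilityMeasure V) : 0 ≤ rT r i μ ν :=
  iint_nonneg (hA2.r_nonneg i) μ ν

lemma rT_le (hA2 : A2Hyps q r W M) (i : ℕ)
    (μ : ProbabilityMeasure U) (ν : ProbabilityMeasure V) : rT r i μ ν ≤ M * W i :=
  iint_le_const (hA2.r_cont i) (hA2.r_le i) μ ν

lemma Iop_mono (hrate : RateHyps q qb) (hA1 : A1Hyps q qb N w c W)
    (hA2 : A2Hyps q r W M) (hM : 0 ≤ M) {α : ℝ} (hα : 0 < α)
    {φ φ' : ℕ → ℝ} (hφ0 : ∀ j, 0 ≤ φ j) (hle : ∀ j, φ j ≤ φ' j)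
    (hφ'M : ∀ j, φ' j ≤ M * W j) (i : ℕ) :
    Iop q r qb α φ i ≤ Iop q r qb α φ' i := by
  haveI : Nonempty (ProbabilityMeasure U) :=
    ⟨⟨Measure.dirac (Classical.arbitrary U), Measure.dirac.isProbabilityMeasure⟩⟩
  haveI : Nonempty (ProbabilityMeasure V) :=
    ⟨⟨Measure.dirac (Classical.arbitrary V), Measure.dirac.isProbabilityMeasure⟩⟩
  have hφ'0 : ∀ j, 0 ≤ φ' j := fun j => le_trans (hφ0 j) (hle j)
  have hφM : ∀ j, φ j ≤ M * W j := fun j => le_trans (hle j) (hφ'M j)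
  have hk : 0 ≤ qb i := qb_nonneg hrate i
  have hd : (0 : ℝ) < α + qb i + 1 := by linarith
  set S : (ℕ → ℝ) → ProbabilityMeasure U → ProbabilityMeasure V → ℝ := fun ψ μ ν =>
    rT r i μ ν / (α + qb i + 1) +
      ((qb i + 1) / (α + qb i + 1)) * ∑' j, pT q qb i j μ ν * ψ j with hS
  have hcoef0 : 0 ≤ (qb i + 1) / (α + qb i + 1) := by positivity
  have hcoef1 : (qb i + 1) / (α + qb i + 1) ≤ 1 := by
    rw [div_le_one hd]; linarith
  have hS0 : ∀ (ψ : ℕ → ℝ), (∀ j, 0 ≤ ψ j) → ∀ μ ν, 0 ≤ S ψ μ ν := by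
    intro ψ hψ μ ν
    have h1 : 0 ≤ rT r i μ ν / (α + qb i + 1) :=
      div_nonneg (rT_nonneg hA2 i μ ν) hd.le
    have h2 : 0 ≤ ∑' j, pT q qb i j μ ν * ψ j :=
      tsum_nonneg fun j => mul_nonneg (pT_nonneg hrate hA2 i j μ ν) (hψ j)
    have := mul_nonneg hcoef0 h2
    simp only [hS]
    linarith
  have hSB : ∀ (ψ : ℕ → ℝ), (∀ j, 0 ≤ ψ j) → (∀ j, ψ j ≤ M * W j) →
      ∀ μ ν, S ψ μ ν ≤ 3 * M * W i := by
    intro ψ hψ0 hψM μ ν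
    have h1 : rT r i μ ν / (α + qb i + 1) ≤ M * W i := by
      calc rT r i μ ν / (α + qb i + 1) ≤ M * W i / (α + qb i + 1) := by
            gcongr
            exact rT_le hA2 i μ ν
        _ ≤ M * W i := by
            apply div_le_self (mul_nonneg hM (hA1.W_pos i).le)
            linarith
    have h2 : ((qb i + 1) / (α + qb i + 1)) * ∑' j, pT q qb i j μ ν * ψ j
        ≤ 1 * (M * (2 * W i)) := by
      apply mul_le_mul hcoef1 (tsum_pTphi_le hrate hA1 hA2 hM i μ ν hψ0 hψM)
        (tsum_nonneg fun j => mul_nonneg (pT_nonneg hrate hA2 i j μ ν) (hψ0 j))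
        zero_le_one
    have hW := (hA1.W_pos i).le
    simp only [hS]
    nlinarith
  rw [Iop, Iop]
  have hBdd : ∀ (ψ : ℕ → ℝ), (∀ j, 0 ≤ ψ j) → (∀ j, ψ j ≤ M * W j) → ∀ μ,
      BddAbove (Set.range fun ν => S ψ μ ν) := by
    intro ψ h0 h1 μ
    exact ⟨3 * M * W i, by rintro x ⟨ν, rfl⟩; exact hSB ψ h0 h1 μ ν⟩
  refine ciInf_mono ⟨0, ?_⟩ fun μ => ?_
  · rintro x ⟨μ, rfl⟩
    exact le_ciSup_of_le (hBdd φ hφ0 hφM μ) (Classical.arbitrary _)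
      (hS0 φ hφ0 μ _)
  · refine ciSup_mono (hBdd φ' hφ'0 hφ'M μ) fun ν => ?_
    have hsum : ∑' j, pT q qb i j μ ν * φ j ≤ ∑' j, pT q qb i j μ ν * φ' j :=
      Summable.tsum_le_tsum
        (fun j => mul_le_mul_of_nonneg_left (hle j) (pT_nonneg hrate hA2 i j μ ν))
        (pTphi_summable hrate hA1 hA2 hM i μ ν hφ0 hφM)
        (pTphi_summable hrate hA1 hA2 hM i μ ν hφ'0 hφ'M)
    have := mul_le_mul_of_nonneg_left hsum hcoef0
    linarith

lemma Tmap_mono (hrate : RateHyps q qb) (hA1 : A1Hyps q qb N w c W)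
    (hA2 : A2Hyps q r W M) (hM : 0 ≤ M) {α : ℝ} (hα : 0 < α) (ψ₁ ψ₂ : ℕ → ℝ)
    {φ φ' : ℕ → ℝ} (hφ0 : ∀ j, 0 ≤ φ j) (hle : ∀ j, φ j ≤ φ' j)
    (hφ'M : ∀ j, φ' j ≤ M * W j) (i : ℕ) :
    Tmap q r qb α ψ₁ ψ₂ φ i ≤ Tmap q r qb α ψ₁ ψ₂ φ' i :=
  min_le_min (max_le_max (Iop_mono hrate hA1 hA2 hM hα hφ0 hle hφ'M i) le_rfl) le_rfl

end QFacts

/-- The pointwise limit `u*` of the iterates satisfies `T u* ≥ u*`. -/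
theorem stmt15 {U V : Type} [MetricSpace U] [CompactSpace U] [Nonempty U]
    [MeasurableSpace U] [BorelSpace U]
    [MetricSpace V] [CompactSpace V] [Nonempty V]
    [MeasurableSpace V] [BorelSpace V]
    (q : ℕ → ℕ → U → V → ℝ) (r : ℕ → U → V → ℝ) (qb : ℕ → ℝ)
    (N : ℕ) (w : ℕ → ℕ → ℝ) (c : ℝ) (W : ℕ → ℝ) (M : ℝ) (α : ℝ) (ψ₁ ψ₂ : ℕ → ℝ)
    (hrate : RateHyps q qb) (hA1 : A1Hyps q qb N w c W)
    (hA2 : A2Hyps q r W M) (hψ : PsiHyps ψ₁ ψ₂ W M) (hα : 0 < α) :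
    ∀ u : ℕ → ℕ → ℝ, u 0 = ψ₂ → (∀ n, u (n + 1) = Tmap q r qb α ψ₁ ψ₂ (u n)) →
      ∀ ustar : ℕ → ℝ, (∀ i, Tendsto (fun n => u n i) atTop (𝓝 (ustar i))) →
        ∀ i : ℕ, ustar i ≤ Tmap q r qb α ψ₁ ψ₂ ustar i := by
  intro u hu0 hu ustar hlim i
  have hM : 0 ≤ M := by
    have h1 := hψ.ψ₂_nonneg 0
    have h2 := hψ.ψ₂_lt_ψ₁ 0
    have h3 := hψ.ψ₁_le 0
    have h4 := hA1.W_pos 0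
    nlinarith
  have hbounds : ∀ n, (∀ j, 0 ≤ u n j) ∧ (∀ j, u n j ≤ M * W j) := by
    intro n
    cases n with
    | zero =>
      rw [hu0]
      exact ⟨hψ.ψ₂_nonneg,
        fun j => le_trans (hψ.ψ₂_lt_ψ₁ j).le (hψ.ψ₁_le j)⟩
    | succ n =>
      rw [hu n]
      refine ⟨fun j => ?_, fun j => ?_⟩
      · exact le_min (le_trans (hψ.ψ₂_nonneg j) (le_max_right _ _))
          (le_trans (hψ.ψ₂_nonneg j) (hψ.ψ₂_lt_ψ₁ j).le)
      · exact le_trans (min_le_right _ _) (hψ.ψ₁_le j)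
  have hmono : ∀ n, ∀ j, u n j ≤ u (n + 1) j := by
    intro n
    induction n with
    | zero =>
      intro j
      rw [hu 0, hu0]
      exact le_min (le_max_right _ _) (hψ.ψ₂_lt_ψ₁ j).le
    | succ n ih =>
      intro j
      calc u (n + 1) j = Tmap q r qb α ψ₁ ψ₂ (u n) j := by rw [hu n]
        _ ≤ Tmap q r qb α ψ₁ ψ₂ (u (n + 1)) j :=
            Tmap_mono hrate hA1 hA2 hM hα ψ₁ ψ₂ (hbounds n).1 ih
              (hbounds (n + 1)).2 j
        _ = u (n + 1 + 1) j := (congrFun (hu (n + 1)) j).symm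
  have hle_star : ∀ n j, u n j ≤ ustar j := fun n j =>
    (monotone_nat_of_le_succ fun m => hmono m j).ge_of_tendsto (hlim j) n
  have hstarM : ∀ j, ustar j ≤ M * W j := fun j =>
    le_of_tendsto (hlim j) (Filter.Eventually.of_forall fun n => (hbounds n).2 j)
  have hstep : ∀ n, u (n + 1) i ≤ Tmap q r qb α ψ₁ ψ₂ ustar i := by
    intro n
    rw [hu n]
    exact Tmap_mono hrate hA1 hA2 hM hα ψ₁ ψ₂ (hbounds n).1
      (fun j => hle_star n j) hstarM i
  have hlim' : Tendsto (fun n => u (n + 1) i) atTop (𝓝 (ustar i)) :=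
    (hlim i).comp (tendsto_add_atTop_nat 1)
  exact le_of_tendsto hlim' (Filter.Eventually.of_forall hstep)
end

section
/- Under (A1) and (A2), the pointwise limit u* of the iterates u_0 := ψ_2, u_n := T u_{n−1} satisfies u*(i) ≥ T u*(i) for all i ∈ S. -/
open MeasureTheory Filter Topology

noncomputable section S16Aux

open MeasureTheory Filter Topology

set_option linter.unusedSectionVars false

namespace S16

variable {U V : Type} [MetricSpace U] [CompactSpace U] [Nonempty U]
    [MeasurableSpace U] [BorelSpace U]
    [MetricSpace V] [CompactSpace V] [Nonempty V]
    [MeasurableSpace V] [BorelSpace V]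

/-- iterated integral, inner over `U`, outer over `V`. -/
def DI (f : U → V → ℝ) (μ : Measure U) (ν : Measure V) : ℝ :=
  ∫ b, (∫ a, f a b ∂μ) ∂ν

lemma cont_slice {f : U → V → ℝ} (hf : Continuous fun p : U × V => f p.1 p.2) (b : V) :
    Continuous fun a => f a b :=
  hf.comp (continuous_id.prodMk continuous_const)

lemma cont_slice' {f : U → V → ℝ} (hf : Continuous fun p : U × V => f p.1 p.2) (a : U) :
    Continuous fun b => f a b :=
  hf.comp (continuous_const.prodMk continuous_id)

lemma exists_bound {X : Type} [TopologicalSpace X] [CompactSpace X] [Nonempty X]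
    {g : X → ℝ} (hg : Continuous g) : ∃ K, ∀ x, g x ≤ K := by
  obtain ⟨x₀, -, h⟩ := isCompact_univ.exists_isMaxOn Set.univ_nonempty hg.continuousOn
  exact ⟨g x₀, fun x => h (Set.mem_univ x)⟩

lemma integrable_of_continuous {X : Type} [MetricSpace X] [CompactSpace X]
    [MeasurableSpace X] [BorelSpace X] (μ : Measure X) [IsFiniteMeasure μ]
    {g : X → ℝ} (hg : Continuous g) : Integrable g μ :=
  hg.integrable_of_hasCompactSupport (HasCompactSupport.of_compactSpace g)

lemma integral_le_const {X : Type} [MeasurableSpace X] (μ : Measure X)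
    [IsProbabilityMeasure μ] {g : X → ℝ} (hg : Integrable g μ) {C : ℝ}
    (h : ∀ x, g x ≤ C) : ∫ x, g x ∂μ ≤ C := by
  calc ∫ x, g x ∂μ ≤ ∫ _x, C ∂μ := integral_mono hg (integrable_const C) h
  _ = C := by simp

lemma const_le_integral {X : Type} [MeasurableSpace X] (μ : Measure X)
    [IsProbabilityMeasure μ] {g : X → ℝ} (hg : Integrable g μ) {C : ℝ}
    (h : ∀ x, C ≤ g x) : C ≤ ∫ x, g x ∂μ := by
  calc C = ∫ _x, C ∂μ := by simp
  _ ≤ ∫ x, g x ∂μ := integral_mono (integrable_const C) hg h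

lemma cont_intf {f : U → V → ℝ} (hf : Continuous fun p : U × V => f p.1 p.2)
    (μ : Measure U) [IsProbabilityMeasure μ] :
    Continuous fun b => ∫ a, f a b ∂μ := by
  obtain ⟨K, hK⟩ := exists_bound (X := U × V) hf.abs
  rw [continuous_iff_continuousAt]
  intro b₀
  apply tendsto_integral_filter_of_dominated_convergence (bound := fun _ => K)
  · exact Eventually.of_forall fun b => (cont_slice hf b).aestronglyMeasurable
  · exact Eventually.of_forall fun b => ae_of_all _ fun a => by
      simpa [Real.norm_eq_abs] using hK (a, b)
  · exact integrable_const K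
  · exact ae_of_all _ fun a => ((cont_slice' hf a).tendsto b₀)

lemma integrable_intf {f : U → V → ℝ} (hf : Continuous fun p : U × V => f p.1 p.2)
    (μ : Measure U) [IsProbabilityMeasure μ] (ν : Measure V) [IsProbabilityMeasure ν] :
    Integrable (fun b => ∫ a, f a b ∂μ) ν :=
  integrable_of_continuous ν (cont_intf hf μ)

variable (μ : Measure U) [IsProbabilityMeasure μ] (ν : Measure V) [IsProbabilityMeasure ν]

lemma DI_mono {f g : U → V → ℝ} (hf : Continuous fun p : U × V => f p.1 p.2)
    (hg : Continuous fun p : U × V => g p.1 p.2) (h : ∀ a b, f a b ≤ g a b) :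
    DI f μ ν ≤ DI g μ ν :=
  integral_mono (integrable_intf hf μ ν) (integrable_intf hg μ ν) fun b =>
    integral_mono (integrable_of_continuous μ (cont_slice hf b))
      (integrable_of_continuous μ (cont_slice hg b)) fun a => h a b

lemma DI_le_const {f : U → V → ℝ} (hf : Continuous fun p : U × V => f p.1 p.2)
    {C : ℝ} (h : ∀ a b, f a b ≤ C) : DI f μ ν ≤ C :=
  integral_le_const ν (integrable_intf hf μ ν) fun b =>
    integral_le_const μ (integrable_of_continuous μ (cont_slice hf b)) fun a => h a b

lemma const_le_DI {f : U → V → ℝ} (hf : Continuous fun p : U × V => f p.1 p.2)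
    {C : ℝ} (h : ∀ a b, C ≤ f a b) : C ≤ DI f μ ν :=
  const_le_integral ν (integrable_intf hf μ ν) fun b =>
    const_le_integral μ (integrable_of_continuous μ (cont_slice hf b)) fun a => h a b

lemma DI_nonneg {f : U → V → ℝ} (hf : Continuous fun p : U × V => f p.1 p.2)
    (h : ∀ a b, 0 ≤ f a b) : 0 ≤ DI f μ ν :=
  const_le_DI μ ν hf h

lemma abs_DI_le {f : U → V → ℝ} (hf : Continuous fun p : U × V => f p.1 p.2) :
    |DI f μ ν| ≤ DI (fun a b => |f a b|) μ ν := by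
  rw [abs_le]
  constructor
  · rw [neg_le]
    have : -DI f μ ν = DI (fun a b => -f a b) μ ν := by
      simp [DI, integral_neg]
    rw [this]
    exact DI_mono μ ν hf.neg hf.abs fun a b => neg_le_abs _
  · exact DI_mono μ ν hf hf.abs fun a b => le_abs_self _

lemma DI_finset_sum {s : Finset ℕ} {f : ℕ → U → V → ℝ}
    (hf : ∀ j, Continuous fun p : U × V => f j p.1 p.2) :
    DI (fun a b => ∑ j ∈ s, f j a b) μ ν = ∑ j ∈ s, DI (f j) μ ν := by
  unfold DI
  rw [← integral_finset_sum s (fun j _ => integrable_intf (hf j) μ ν)]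
  congr 1
  ext b
  rw [← integral_finset_sum s (fun j _ => integrable_of_continuous μ (cont_slice (hf j) b))]

lemma DI_mul_const {f : U → V → ℝ} (c : ℝ) :
    DI (fun a b => f a b * c) μ ν = DI f μ ν * c := by
  simp [DI, integral_mul_const]

/-- uniform tail bound: Dini-type argument by finite subcover. -/
lemma uniform_tail {g : ℕ → U × V → ℝ} (hg : ∀ j, Continuous (g j))
    (hgnn : ∀ j p, 0 ≤ g j p) (hsum : ∀ p, Summable fun j => g j p)
    {A : U × V → ℝ} (hA : Continuous A) (hAeq : ∀ p, A p = ∑' j, g j p)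
    {ε : ℝ} (hε : 0 < ε) :
    ∃ m : ℕ, ∀ p : U × V, ∑' j, g (j + m) p ≤ ε := by
  set P : ℕ → U × V → ℝ := fun m p => ∑ j ∈ Finset.range m, g j p with hP
  have hPcont : ∀ m, Continuous (P m) := fun m => continuous_finset_sum _ fun j _ => hg j
  set O : ℕ → Set (U × V) := fun m => {p | A p - P m p < ε} with hO
  have hOopen : ∀ m, IsOpen (O m) := fun m =>
    isOpen_lt ((hA.sub (hPcont m))) continuous_const
  have hcover : (Set.univ : Set (U × V)) ⊆ ⋃ m, O m := by
    intro p _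
    have h1 : Tendsto (fun m => P m p) atTop (𝓝 (A p)) := by
      rw [hAeq p]
      exact (hsum p).hasSum.tendsto_sum_nat
    have h2 : Tendsto (fun m => A p - P m p) atTop (𝓝 0) := by
      simpa using (tendsto_const_nhds (x := A p)).sub h1
    have h3 : ∀ᶠ m in atTop, A p - P m p < ε :=
      (h2.eventually (eventually_lt_nhds hε)).mono fun m hm => by simpa using hm
    obtain ⟨m, hm⟩ := h3.exists
    exact Set.mem_iUnion.mpr ⟨m, hm⟩
  obtain ⟨t, ht⟩ := isCompact_univ.elim_finite_subcover O hOopen hcover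
  have hmono : ∀ m m', m ≤ m' → O m ⊆ O m' := by
    intro m m' hmm' p hp
    have : P m p ≤ P m' p :=
      Finset.sum_le_sum_of_subset_of_nonneg (Finset.range_subset_range.mpr hmm')
        (fun j _ _ => hgnn j p)
    simp only [hO, Set.mem_setOf_eq] at hp ⊢
    linarith
  refine ⟨t.sup id, fun p => ?_⟩
  have hp : p ∈ ⋃ m ∈ t, O m := ht (Set.mem_univ p)
  obtain ⟨m, hmt, hpm⟩ := Set.mem_iUnion₂.mp hp
  have hpm' : p ∈ O (t.sup id) := hmono m _ (Finset.le_sup (f := id) hmt) hpm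
  have htail : ∑' j, g (j + t.sup id) p = A p - P (t.sup id) p := by
    rw [hAeq p]
    have := Summable.sum_add_tsum_nat_add (f := fun j => g j p) (t.sup id) (hsum p)
    linarith
  rw [htail]
  exact le_of_lt hpm'

end S16

end S16Aux


noncomputable section S16Aux2

open MeasureTheory Filter Topology

set_option linter.unusedSectionVars false

namespace S16

variable {U V : Type} [MetricSpace U] [CompactSpace U] [Nonempty U]
    [MeasurableSpace U] [BorelSpace U]
    [MetricSpace V] [CompactSpace V] [Nonempty V]
    [MeasurableSpace V] [BorelSpace V]
    {q : ℕ → ℕ → U → V → ℝ} {r : ℕ → U → V → ℝ} {qb : ℕ → ℝ}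
    {N : ℕ} {w : ℕ → ℕ → ℝ} {c : ℝ} {W : ℕ → ℝ} {M : ℝ} {α : ℝ}
    {ψ₁ ψ₂ : ℕ → ℝ}

section RateFacts

variable (hrate : RateHyps q qb) (hA1 : A1Hyps q qb N w c W)
    (hA2 : A2Hyps q r W M) (hψ : PsiHyps ψ₁ ψ₂ W M)

include hrate

lemma qdiag_eq (i : ℕ) (a : U) (b : V) :
    q i i a b = -∑' j, if j = i then (0:ℝ) else q i j a b := by
  have h := Summable.tsum_eq_add_tsum_ite (hrate.summable i a b) i
  rw [hrate.conservative i a b] at h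
  linarith

lemma sum_off_nonneg (i : ℕ) (a : U) (b : V) :
    0 ≤ ∑' j, if j = i then (0:ℝ) else q i j a b :=
  tsum_nonneg fun j => by
    by_cases h : j = i <;> simp [h, hrate.off_nonneg i j a b]

lemma qdiag_nonpos (i : ℕ) (a : U) (b : V) : q i i a b ≤ 0 := by
  rw [qdiag_eq hrate]
  have := sum_off_nonneg hrate i a b
  linarith

lemma sum_off_le (i : ℕ) (a : U) (b : V) :
    (∑' j, if j = i then (0:ℝ) else q i j a b) ≤ qb i :=
  (hrate.stable i).1 ⟨(a, b), rfl⟩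

lemma qdiag_ge (i : ℕ) (a : U) (b : V) : -qb i ≤ q i i a b := by
  rw [qdiag_eq hrate]
  have := sum_off_le hrate i a b
  linarith

lemma qb_nonneg (i : ℕ) : 0 ≤ qb i := by
  obtain ⟨a⟩ := ‹Nonempty U›
  obtain ⟨b⟩ := ‹Nonempty V›
  exact (sum_off_nonneg hrate i a b).trans (sum_off_le hrate i a b)

omit hrate

include hA1

lemma W_nonneg (i : ℕ) : 0 ≤ W i := (hA1.W_pos i).le

lemma summable_qW (i : ℕ) (a : U) (b : V) : Summable fun j => q i j a b * W j := by
  have h : Summable fun j => ∑ n ∈ Finset.range N, q i j a b * w n j :=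
    summable_sum fun n hn => hA1.w_summable n (Finset.mem_range.mp hn) i a b
  refine h.congr fun j => ?_
  rw [hA1.W_def j, Finset.mul_sum]

include hrate

lemma absqW_eq (i : ℕ) (a : U) (b : V) (j : ℕ) :
    |q i j a b| * W j
      = q i j a b * W j - 2 * (if j = i then q i i a b * W i else 0) := by
  by_cases h : j = i
  · subst h
    rw [abs_of_nonpos (qdiag_nonpos hrate j a b)]
    simp; ring
  · rw [abs_of_nonneg (hrate.off_nonneg i j a b h)]
    simp [h]

lemma summable_absqW (i : ℕ) (a : U) (b : V) :
    Summable fun j => |q i j a b| * W j := by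
  have h2 : Summable fun j => (if j = i then q i i a b * W i else 0 : ℝ) :=
    (hasSum_ite_eq i (q i i a b * W i)).summable
  have h := (summable_qW hA1 i a b).sub (h2.mul_left 2)
  exact h.congr fun j => (absqW_eq hrate hA1 i a b j).symm

lemma tsum_absqW (i : ℕ) (a : U) (b : V) :
    ∑' j, |q i j a b| * W j
      = (∑' j, q i j a b * W j) - 2 * (q i i a b * W i) := by
  have h2 : Summable fun j => (if j = i then q i i a b * W i else 0 : ℝ) :=
    (hasSum_ite_eq i (q i i a b * W i)).summable
  calc ∑' j, |q i j a b| * W j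
      = ∑' j, (q i j a b * W j - 2 * (if j = i then q i i a b * W i else 0)) := by
        exact tsum_congr fun j => absqW_eq hrate hA1 i a b j
    _ = (∑' j, q i j a b * W j) - ∑' j, 2 * (if j = i then q i i a b * W i else 0 : ℝ) :=
        Summable.tsum_sub (summable_qW hA1 i a b) (h2.mul_left 2)
    _ = (∑' j, q i j a b * W j) - 2 * (q i i a b * W i) := by
        rw [tsum_mul_left, tsum_ite_eq]

include hA2

lemma A_cont (i : ℕ) :
    Continuous fun p : U × V =>
      (∑' j, q i j p.1 p.2 * W j) - 2 * (q i i p.1 p.2 * W i) :=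
  (hA2.qW_cont i).sub (continuous_const.mul ((hA2.q_cont i i).mul continuous_const))

lemma exists_CA (i : ℕ) :
    ∃ CA : ℝ, 0 ≤ CA ∧ ∀ a b, ∑' j, |q i j a b| * W j ≤ CA := by
  obtain ⟨CA, hCA⟩ := exists_bound (X := U × V) (A_cont hrate hA1 hA2 i)
  obtain ⟨a⟩ := ‹Nonempty U›
  obtain ⟨b⟩ := ‹Nonempty V›
  have key : ∀ a b, ∑' j, |q i j a b| * W j ≤ CA := fun a b => by
    rw [tsum_absqW hrate hA1 i a b]; exact hCA (a, b)
  refine ⟨CA, le_trans ?_ (key a b), key⟩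
  exact tsum_nonneg fun j => mul_nonneg (abs_nonneg _) (W_nonneg hA1 j)

lemma tail_small (i : ℕ) {ε : ℝ} (hε : 0 < ε) :
    ∃ m : ℕ, ∀ a b, ∑' j, |q i (j + m) a b| * W (j + m) ≤ ε := by
  obtain ⟨m, hm⟩ := uniform_tail (g := fun j (p : U × V) => |q i j p.1 p.2| * W j)
    (fun j => ((hA2.q_cont i j).abs.mul continuous_const))
    (fun j p => mul_nonneg (abs_nonneg _) (W_nonneg hA1 j))
    (fun p => summable_absqW hrate hA1 i p.1 p.2)
    (A_cont hrate hA1 hA2 i)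
    (fun p => (tsum_absqW hrate hA1 i p.1 p.2).symm) hε
  exact ⟨m, fun a b => hm (a, b)⟩

end RateFacts

end S16

end S16Aux2


noncomputable section S16Aux3

open MeasureTheory Filter Topology

set_option linter.unusedSectionVars false

namespace S16

variable {U V : Type} [MetricSpace U] [CompactSpace U] [Nonempty U]
    [MeasurableSpace U] [BorelSpace U]
    [MetricSpace V] [CompactSpace V] [Nonempty V]
    [MeasurableSpace V] [BorelSpace V]
    {q : ℕ → ℕ → U → V → ℝ} {r : ℕ → U → V → ℝ} {qb : ℕ → ℝ}
    {N : ℕ} {w : ℕ → ℕ → ℝ} {c : ℝ} {W : ℕ → ℝ} {M : ℝ} {α : ℝ}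
    {ψ₁ ψ₂ : ℕ → ℝ}

lemma nonempty_PM {X : Type} [MetricSpace X] [Nonempty X] [MeasurableSpace X]
    [BorelSpace X] : Nonempty (ProbabilityMeasure X) :=
  ⟨⟨Measure.dirac Classical.ofNonempty, inferInstance⟩⟩

/-- `∬ |q i j|`. -/
def Qb (q : ℕ → ℕ → U → V → ℝ) (i j : ℕ) (μ : ProbabilityMeasure U)
    (ν : ProbabilityMeasure V) : ℝ :=
  DI (fun a b => |q i j a b|) (μ : Measure U) (ν : Measure V)

section Integrated

variable (hrate : RateHyps q qb) (hA1 : A1Hyps q qb N w c W)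
    (hA2 : A2Hyps q r W M) (hψ : PsiHyps ψ₁ ψ₂ W M)
    (i : ℕ) (μ : ProbabilityMeasure U) (ν : ProbabilityMeasure V)

include hA2

lemma qT_eq_DI (j : ℕ) : qT q i j μ ν = DI (q i j) (μ : Measure U) (ν : Measure V) := rfl

lemma Qb_nonneg (j : ℕ) : 0 ≤ Qb q i j μ ν :=
  DI_nonneg _ _ (hA2.q_cont i j).abs (fun a b => abs_nonneg _)

lemma Qb_le {j : ℕ} {K : ℝ} (hK : ∀ a b, |q i j a b| ≤ K) : Qb q i j μ ν ≤ K :=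
  DI_le_const _ _ (hA2.q_cont i j).abs hK

lemma abs_qT_le (j : ℕ) : |qT q i j μ ν| ≤ Qb q i j μ ν :=
  abs_DI_le _ _ (hA2.q_cont i j)

include hrate

lemma qT_off_nonneg {j : ℕ} (hj : j ≠ i) : 0 ≤ qT q i j μ ν :=
  DI_nonneg _ _ (hA2.q_cont i j) (fun a b => hrate.off_nonneg i j a b hj)

lemma qT_diag_ge : -qb i ≤ qT q i i μ ν :=
  const_le_DI _ _ (hA2.q_cont i i) (fun a b => qdiag_ge hrate i a b)

lemma pT_nonneg (j : ℕ) : 0 ≤ pT q qb i j μ ν := by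
  have hqb := qb_nonneg hrate i
  have h1 : (0:ℝ) < qb i + 1 := by linarith
  by_cases h : i = j
  · subst h
    have h2 : -(qb i + 1) ≤ qT q i i μ ν := by
      have := qT_diag_ge hrate hA2 i μ ν
      linarith
    have h3 : (-1 : ℝ) ≤ qT q i i μ ν / (qb i + 1) := by
      rw [neg_le, ← neg_div]
      exact (div_le_one h1).mpr (by linarith)
    show 0 ≤ qT q i i μ ν / (qb i + 1) + if i = i then (1:ℝ) else 0
    rw [if_pos rfl]
    linarith
  · show 0 ≤ qT q i j μ ν / (qb i + 1) + if i = j then (1:ℝ) else 0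
    rw [if_neg h, add_zero]
    exact div_nonneg (qT_off_nonneg hrate hA2 i μ ν (fun hji => h hji.symm)) h1.le

include hA1

lemma sum_range_QbW_le (σ : ℕ → ℕ) {C : ℝ}
    (hpt : ∀ a b L, ∑ j ∈ Finset.range L, |q i (σ j) a b| * W (σ j) ≤ C) (L : ℕ) :
    ∑ j ∈ Finset.range L, Qb q i (σ j) μ ν * W (σ j) ≤ C := by
  have h1 : ∀ j : ℕ, Qb q i (σ j) μ ν * W (σ j)
      = DI (fun a b => |q i (σ j) a b| * W (σ j)) (μ : Measure U) (ν : Measure V) := by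
    intro j
    rw [DI_mul_const]
    rfl
  have h2 : ∑ j ∈ Finset.range L, Qb q i (σ j) μ ν * W (σ j)
      = DI (fun a b => ∑ j ∈ Finset.range L, |q i (σ j) a b| * W (σ j))
          (μ : Measure U) (ν : Measure V) := by
    rw [DI_finset_sum _ _ (fun j => ((hA2.q_cont i (σ j)).abs.mul continuous_const))]
    exact Finset.sum_congr rfl fun j _ => h1 j
  rw [h2]
  exact DI_le_const _ _ (continuous_finset_sum _ fun j _ =>
    ((hA2.q_cont i (σ j)).abs.mul continuous_const)) (fun a b => hpt a b L)

lemma summable_QbW_of (σ : ℕ → ℕ) {C : ℝ}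
    (hpt : ∀ a b L, ∑ j ∈ Finset.range L, |q i (σ j) a b| * W (σ j) ≤ C) :
    Summable (fun j => Qb q i (σ j) μ ν * W (σ j))
      ∧ ∑' j, Qb q i (σ j) μ ν * W (σ j) ≤ C := by
  have hnn : ∀ j : ℕ, 0 ≤ Qb q i (σ j) μ ν * W (σ j) := fun j =>
    mul_nonneg (Qb_nonneg hA2 i μ ν (σ j)) (W_nonneg hA1 (σ j))
  have hs := summable_of_sum_range_le hnn (sum_range_QbW_le hrate hA1 hA2 i μ ν σ hpt)
  exact ⟨hs, Summable.tsum_le_of_sum_range_le hs (sum_range_QbW_le hrate hA1 hA2 i μ ν σ hpt)⟩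

include hA2

lemma pointwise_id_bound {CA : ℝ} (hCA : ∀ a b, ∑' j, |q i j a b| * W j ≤ CA) :
    ∀ a b L, ∑ j ∈ Finset.range L, |q i j a b| * W j ≤ CA := fun a b L =>
  le_trans (Summable.sum_le_tsum (Finset.range L)
    (fun j _ => mul_nonneg (abs_nonneg _) (W_nonneg hA1 j))
    (summable_absqW hrate hA1 i a b)) (hCA a b)

lemma pointwise_shift_bound {m : ℕ} {ε : ℝ}
    (hm : ∀ a b, ∑' j, |q i (j + m) a b| * W (j + m) ≤ ε) :
    ∀ a b L, ∑ j ∈ Finset.range L, |q i (j + m) a b| * W (j + m) ≤ ε := fun a b L =>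
  le_trans (Summable.sum_le_tsum (Finset.range L)
    (fun j _ => mul_nonneg (abs_nonneg _) (W_nonneg hA1 (j + m)))
    ((summable_nat_add_iff m).mpr (summable_absqW hrate hA1 i a b))) (hm a b)

end Integrated

section PhiLevel

variable (hrate : RateHyps q qb) (hA1 : A1Hyps q qb N w c W)
    (hA2 : A2Hyps q r W M) (hψ : PsiHyps ψ₁ ψ₂ W M)
    (i : ℕ) (μ : ProbabilityMeasure U) (ν : ProbabilityMeasure V)

include hψ hA1

lemma M_pos : 0 < M := by
  have h1 : 0 < M * W 0 :=
    lt_of_le_of_lt (hψ.ψ₂_nonneg 0) (lt_of_lt_of_le (hψ.ψ₂_lt_ψ₁ 0) (hψ.ψ₁_le 0))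
  nlinarith [hA1.W_pos 0]

include hrate hA2

variable {CA : ℝ} (hCA : ∀ a b, ∑' j, |q i j a b| * W j ≤ CA)
    {φ : ℕ → ℝ} (hφ0 : ∀ j, 0 ≤ φ j) (hφM : ∀ j, φ j ≤ M * W j)

include hCA hφ0 hφM

lemma summable_qTφ : Summable fun j => qT q i j μ ν * φ j := by
  have hQ := (summable_QbW_of hrate hA1 hA2 i μ ν id
    (pointwise_id_bound hrate hA1 hA2 i hCA)).1
  apply Summable.of_abs
  apply Summable.of_nonneg_of_le (fun j => abs_nonneg _)
    (f := fun j => M * (Qb q i j μ ν * W j))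
  · intro j
    rw [abs_mul]
    calc |qT q i j μ ν| * |φ j| ≤ Qb q i j μ ν * (M * W j) := by
          apply mul_le_mul (abs_qT_le hA2 i μ ν j)
            (by rw [abs_of_nonneg (hφ0 j)]; exact hφM j) (abs_nonneg _)
            (Qb_nonneg hA2 i μ ν j)
      _ = M * (Qb q i j μ ν * W j) := by ring
  · exact hQ.mul_left M

lemma summable_pTφ : Summable fun j => pT q qb i j μ ν * φ j := by
  have h1 : ∀ j : ℕ, pT q qb i j μ ν * φ j
      = qT q i j μ ν * φ j / (qb i + 1) + (if j = i then φ i else 0) := by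
    intro j
    show (qT q i j μ ν / (qb i + 1) + if i = j then (1:ℝ) else 0) * φ j
      = qT q i j μ ν * φ j / (qb i + 1) + (if j = i then φ i else 0)
    by_cases h : i = j
    · subst h; rw [if_pos rfl, if_pos rfl]; ring
    · rw [if_neg h, if_neg (fun hj => h hj.symm)]; ring
  have h2 : Summable fun j => qT q i j μ ν * φ j / (qb i + 1) :=
    (summable_qTφ hrate hA1 hA2 hψ i μ ν hCA hφ0 hφM).div_const _
  have h3 : Summable fun j => (if j = i then φ i else 0 : ℝ) :=
    (hasSum_ite_eq i (φ i)).summable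
  exact ((h2.add h3).congr fun j => (h1 j).symm)

lemma tsum_pT_split :
    ∑' j, pT q qb i j μ ν * φ j
      = (∑' j, qT q i j μ ν * φ j) / (qb i + 1) + φ i := by
  have h1 : ∀ j : ℕ, pT q qb i j μ ν * φ j
      = qT q i j μ ν * φ j / (qb i + 1) + (if j = i then φ i else 0) := by
    intro j
    show (qT q i j μ ν / (qb i + 1) + if i = j then (1:ℝ) else 0) * φ j
      = qT q i j μ ν * φ j / (qb i + 1) + (if j = i then φ i else 0)
    by_cases h : i = j
    · subst h; rw [if_pos rfl, if_pos rfl]; ring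
    · rw [if_neg h, if_neg (fun hj => h hj.symm)]; ring
  have h2 : Summable fun j => qT q i j μ ν * φ j / (qb i + 1) :=
    (summable_qTφ hrate hA1 hA2 hψ i μ ν hCA hφ0 hφM).div_const _
  have h3 : Summable fun j => (if j = i then φ i else 0 : ℝ) :=
    (hasSum_ite_eq i (φ i)).summable
  calc ∑' j, pT q qb i j μ ν * φ j
      = ∑' j, (qT q i j μ ν * φ j / (qb i + 1) + (if j = i then φ i else 0)) :=
        tsum_congr h1
    _ = (∑' j, qT q i j μ ν * φ j / (qb i + 1)) + ∑' j, (if j = i then φ i else 0 : ℝ) :=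
        Summable.tsum_add h2 h3
    _ = (∑' j, qT q i j μ ν * φ j) / (qb i + 1) + φ i := by
        rw [tsum_div_const, tsum_ite_eq]

lemma tsum_pT_nonneg : 0 ≤ ∑' j, pT q qb i j μ ν * φ j :=
  tsum_nonneg fun j => mul_nonneg (pT_nonneg hrate hA2 i μ ν j) (hφ0 j)

lemma tsum_qTφ_le : ∑' j, qT q i j μ ν * φ j ≤ M * CA := by
  have hQ := summable_QbW_of hrate hA1 hA2 i μ ν id
    (pointwise_id_bound hrate hA1 hA2 i hCA)
  have hM := M_pos hA1 hψ
  calc ∑' j, qT q i j μ ν * φ j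
      ≤ ∑' j, M * (Qb q i j μ ν * W j) := by
        apply Summable.tsum_le_tsum ?_ (summable_qTφ hrate hA1 hA2 hψ i μ ν hCA hφ0 hφM)
          (hQ.1.mul_left M)
        intro j
        calc qT q i j μ ν * φ j ≤ |qT q i j μ ν * φ j| := le_abs_self _
          _ ≤ M * (Qb q i j μ ν * W j) := by
            rw [abs_mul]
            calc |qT q i j μ ν| * |φ j| ≤ Qb q i j μ ν * (M * W j) := by
                  apply mul_le_mul (abs_qT_le hA2 i μ ν j)
                    (by rw [abs_of_nonneg (hφ0 j)]; exact hφM j) (abs_nonneg _)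
                    (Qb_nonneg hA2 i μ ν j)
              _ = M * (Qb q i j μ ν * W j) := by ring
    _ = M * ∑' j, Qb q i j μ ν * W j := tsum_mul_left
    _ ≤ M * CA := mul_le_mul_of_nonneg_left hQ.2 hM.le

include hψ

lemma tsum_pT_le (hCA0 : 0 ≤ CA) :
    ∑' j, pT q qb i j μ ν * φ j ≤ M * CA + M * W i := by
  rw [tsum_pT_split hrate hA1 hA2 hψ i μ ν hCA hφ0 hφM]
  have hqb := qb_nonneg hrate i
  have hM := M_pos hA1 hψ
  have h1 : (∑' j, qT q i j μ ν * φ j) / (qb i + 1) ≤ M * CA := by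
    rcases le_or_gt (∑' j, qT q i j μ ν * φ j) 0 with h | h
    · exact le_trans (div_nonpos_of_nonpos_of_nonneg h (by linarith))
        (mul_nonneg hM.le hCA0)
    · exact le_trans (div_le_self h.le (by linarith))
        (tsum_qTφ_le hrate hA1 hA2 hψ i μ ν hCA hφ0 hφM)
  have h2 : φ i ≤ M * W i := hφM i
  linarith

end PhiLevel

end S16

end S16Aux3


noncomputable section S16Aux4

open MeasureTheory Filter Topology

set_option linter.unusedSectionVars false

namespace S16

variable {U V : Type} [MetricSpace U] [CompactSpace U] [Nonempty U]
    [MeasurableSpace U] [BorelSpace U]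
    [MetricSpace V] [CompactSpace V] [Nonempty V]
    [MeasurableSpace V] [BorelSpace V]
    {q : ℕ → ℕ → U → V → ℝ} {r : ℕ → U → V → ℝ} {qb : ℕ → ℝ}
    {N : ℕ} {w : ℕ → ℕ → ℝ} {c : ℝ} {W : ℕ → ℝ} {M : ℝ} {α : ℝ}
    {ψ₁ ψ₂ : ℕ → ℝ}

/-- the inner expression of `Iop`. -/
def bodyF (q : ℕ → ℕ → U → V → ℝ) (r : ℕ → U → V → ℝ) (qb : ℕ → ℝ) (α : ℝ)
    (φ : ℕ → ℝ) (i : ℕ) (μ : ProbabilityMeasure U) (ν : ProbabilityMeasure V) : ℝ :=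
  rT r i μ ν / (α + qb i + 1) +
    ((qb i + 1) / (α + qb i + 1)) * ∑' j, pT q qb i j μ ν * φ j

lemma Iop_eq (φ : ℕ → ℝ) (i : ℕ) :
    Iop q r qb α φ i
      = ⨅ μ : ProbabilityMeasure U, ⨆ ν : ProbabilityMeasure V,
          bodyF q r qb α φ i μ ν := rfl

section BodyLevel

variable (hrate : RateHyps q qb) (hA1 : A1Hyps q qb N w c W)
    (hA2 : A2Hyps q r W M) (hψ : PsiHyps ψ₁ ψ₂ W M) (hα : 0 < α) (i : ℕ)

include hA2

lemma rT_nonneg (μ : ProbabilityMeasure U) (ν : ProbabilityMeasure V) :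
    0 ≤ rT r i μ ν :=
  DI_nonneg _ _ (hA2.r_cont i) (fun a b => hA2.r_nonneg i a b)

lemma rT_le (μ : ProbabilityMeasure U) (ν : ProbabilityMeasure V) :
    rT r i μ ν ≤ M * W i :=
  DI_le_const _ _ (hA2.r_cont i) (fun a b => hA2.r_le i a b)

omit hA2

include hrate hα

lemma d_pos : (0:ℝ) < α + qb i + 1 := by
  have := qb_nonneg hrate i
  linarith

lemma k_nonneg : (0:ℝ) ≤ (qb i + 1) / (α + qb i + 1) := by
  have := qb_nonneg hrate i
  have := d_pos hrate hα i
  positivity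

lemma k_le_one : (qb i + 1) / (α + qb i + 1) ≤ 1 :=
  (div_le_one (d_pos hrate hα i)).mpr (by linarith)

include hA2 hA1 hψ

variable {CA : ℝ} (hCA0 : 0 ≤ CA) (hCA : ∀ a b, ∑' j, |q i j a b| * W j ≤ CA)
    {φ : ℕ → ℝ} (hφ0 : ∀ j, 0 ≤ φ j) (hφM : ∀ j, φ j ≤ M * W j)

include hCA hCA0 hφ0 hφM

lemma body_nonneg (μ : ProbabilityMeasure U) (ν : ProbabilityMeasure V) :
    0 ≤ bodyF q r qb α φ i μ ν :=
  add_nonneg (div_nonneg (rT_nonneg hA2 i μ ν) (d_pos hrate hα i).le)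
    (mul_nonneg (k_nonneg hrate hα i)
      (tsum_pT_nonneg hrate hA1 hA2 hψ i μ ν hCA hφ0 hφM))

lemma body_le_B (μ : ProbabilityMeasure U) (ν : ProbabilityMeasure V) :
    bodyF q r qb α φ i μ ν ≤ M * W i + (M * CA + M * W i) := by
  have h1 : rT r i μ ν / (α + qb i + 1) ≤ M * W i :=
    le_trans (div_le_self (rT_nonneg hA2 i μ ν) (by have := qb_nonneg hrate i; linarith))
      (rT_le hA2 i μ ν)
  have h2 : ((qb i + 1) / (α + qb i + 1)) * ∑' j, pT q qb i j μ ν * φ j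
      ≤ M * CA + M * W i :=
    le_trans (mul_le_of_le_one_left
        (tsum_pT_nonneg hrate hA1 hA2 hψ i μ ν hCA hφ0 hφM) (k_le_one hrate hα i))
      (tsum_pT_le hrate hA1 hA2 hψ i μ ν hCA hφ0 hφM hCA0)
  exact add_le_add h1 h2

lemma bddAbove_body (μ : ProbabilityMeasure U) :
    BddAbove (Set.range fun ν : ProbabilityMeasure V => bodyF q r qb α φ i μ ν) := by
  refine ⟨M * W i + (M * CA + M * W i), fun x hx => ?_⟩
  obtain ⟨ν, rfl⟩ := hx
  exact body_le_B hrate hA1 hA2 hψ hα i hCA0 hCA hφ0 hφM μ ν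

variable {φ' : ℕ → ℝ} (hφ'0 : ∀ j, 0 ≤ φ' j) (hφ'M : ∀ j, φ' j ≤ M * W j)

include hφ'0 hφ'M

lemma body_mono (hle : ∀ j, φ j ≤ φ' j) (μ : ProbabilityMeasure U)
    (ν : ProbabilityMeasure V) :
    bodyF q r qb α φ i μ ν ≤ bodyF q r qb α φ' i μ ν := by
  apply add_le_add le_rfl
  apply mul_le_mul_of_nonneg_left ?_ (k_nonneg hrate hα i)
  apply Summable.tsum_le_tsum ?_ (summable_pTφ hrate hA1 hA2 hψ i μ ν hCA hφ0 hφM)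
    (summable_pTφ hrate hA1 hA2 hψ i μ ν hCA hφ'0 hφ'M)
  exact fun j => mul_le_mul_of_nonneg_left (hle j) (pT_nonneg hrate hA2 i μ ν j)

lemma Iop_add_le {t : ℝ}
    (h : ∀ (μ : ProbabilityMeasure U) (ν : ProbabilityMeasure V),
      bodyF q r qb α φ' i μ ν ≤ bodyF q r qb α φ i μ ν + t) :
    Iop q r qb α φ' i ≤ Iop q r qb α φ i + t := by
  haveI : Nonempty (ProbabilityMeasure U) := nonempty_PM
  haveI : Nonempty (ProbabilityMeasure V) := nonempty_PM
  rw [Iop_eq, Iop_eq]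
  set S : ProbabilityMeasure U → ℝ := fun μ => ⨆ ν, bodyF q r qb α φ i μ ν with hS
  set S' : ProbabilityMeasure U → ℝ := fun μ => ⨆ ν, bodyF q r qb α φ' i μ ν with hS'
  have h1 : ∀ μ, S' μ ≤ S μ + t := fun μ =>
    ciSup_le fun ν => (h μ ν).trans (add_le_add_left
      (le_ciSup (bddAbove_body hrate hA1 hA2 hψ hα i hCA0 hCA hφ0 hφM μ) ν) t)
  have hS'0 : ∀ μ, 0 ≤ S' μ := fun μ =>
    le_trans (body_nonneg hrate hA1 hA2 hψ hα i hCA0 hCA hφ'0 hφ'M μ Classical.ofNonempty)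
      (le_ciSup (bddAbove_body hrate hA1 hA2 hψ hα i hCA0 hCA hφ'0 hφ'M μ)
        Classical.ofNonempty)
  have hbb : BddBelow (Set.range S') := ⟨0, fun x hx => by
    obtain ⟨μ, rfl⟩ := hx; exact hS'0 μ⟩
  have h2 : ∀ μ, (⨅ μ', S' μ') - t ≤ S μ := fun μ =>
    sub_le_iff_le_add.mpr ((ciInf_le hbb μ).trans (h1 μ))
  have h3 : (⨅ μ', S' μ') - t ≤ ⨅ μ, S μ := le_ciInf h2
  linarith

omit hφ'0 hφ'M hCA hCA0 hφ0 hφM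

lemma Iop_mono {φ φ' : ℕ → ℝ} (hφ0 : ∀ j, 0 ≤ φ j) (hφM : ∀ j, φ j ≤ M * W j)
    (hφ'0 : ∀ j, 0 ≤ φ' j) (hφ'M : ∀ j, φ' j ≤ M * W j) (hle : ∀ j, φ j ≤ φ' j) :
    Iop q r qb α φ i ≤ Iop q r qb α φ' i := by
  obtain ⟨CA, hCA0, hCA⟩ := exists_CA hrate hA1 hA2 i
  have := Iop_add_le hrate hA1 hA2 hψ hα i hCA0 hCA hφ'0 hφ'M hφ0 hφM (t := 0)
    (fun μ ν => by
      rw [add_zero]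
      exact body_mono hrate hA1 hA2 hψ hα i hCA0 hCA hφ0 hφM hφ'0 hφ'M hle μ ν)
  -- note: careful with argument roles of φ and φ' here
  linarith

end BodyLevel

end S16

end S16Aux4

/-- The pointwise limit `u*` of the iterates satisfies `u* ≥ T u*`. -/
theorem stmt16 {U V : Type} [MetricSpace U] [CompactSpace U] [Nonempty U]
    [MeasurableSpace U] [BorelSpace U]
    [MetricSpace V] [CompactSpace V] [Nonempty V]
    [MeasurableSpace V] [BorelSpace V]
    (q : ℕ → ℕ → U → V → ℝ) (r : ℕ → U → V → ℝ) (qb : ℕ → ℝ)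
    (N : ℕ) (w : ℕ → ℕ → ℝ) (c : ℝ) (W : ℕ → ℝ) (M : ℝ) (α : ℝ) (ψ₁ ψ₂ : ℕ → ℝ)
    (hrate : RateHyps q qb) (hA1 : A1Hyps q qb N w c W)
    (hA2 : A2Hyps q r W M) (hψ : PsiHyps ψ₁ ψ₂ W M) (hα : 0 < α) :
    ∀ u : ℕ → ℕ → ℝ, u 0 = ψ₂ → (∀ n, u (n + 1) = Tmap q r qb α ψ₁ ψ₂ (u n)) →
      ∀ ustar : ℕ → ℝ, (∀ i, Tendsto (fun n => u n i) atTop (𝓝 (ustar i))) →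
        ∀ i : ℕ, Tmap q r qb α ψ₁ ψ₂ ustar i ≤ ustar i := by
  intro u hu0 hurec ustar hu i
  have hM := S16.M_pos hA1 hψ
  -- basic bounds on the iterates
  have hbdd : ∀ n j, ψ₂ j ≤ u n j ∧ u n j ≤ ψ₁ j := by
    intro n
    induction n with
    | zero =>
      intro j; rw [hu0]; exact ⟨le_rfl, (hψ.ψ₂_lt_ψ₁ j).le⟩
    | succ n ih =>
      intro j
      rw [hurec n]
      simp only [Tmap]
      exact ⟨le_min (le_max_right _ _) (hψ.ψ₂_lt_ψ₁ j).le, min_le_right _ _⟩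
  have hu0' : ∀ n j, 0 ≤ u n j := fun n j => (hψ.ψ₂_nonneg j).trans (hbdd n j).1
  have huM : ∀ n j, u n j ≤ M * W j := fun n j => (hbdd n j).2.trans (hψ.ψ₁_le j)
  -- monotonicity of the iterates
  have humono : ∀ n, ∀ j, u n j ≤ u (n + 1) j := by
    intro n
    induction n with
    | zero =>
      intro j
      rw [hurec 0, hu0]
      simp only [Tmap]
      exact le_min (le_max_right _ _) (hψ.ψ₂_lt_ψ₁ j).le
    | succ n ih =>
      intro j
      have step : Tmap q r qb α ψ₁ ψ₂ (u n) j ≤ Tmap q r qb α ψ₁ ψ₂ (u (n + 1)) j := by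
        simp only [Tmap]
        refine min_le_min (max_le_max ?_ le_rfl) le_rfl
        exact S16.Iop_mono hrate hA1 hA2 hψ hα j (hu0' n) (huM n) (hu0' (n + 1))
          (huM (n + 1)) ih
      rw [hurec (n + 1)]
      calc u (n + 1) j = Tmap q r qb α ψ₁ ψ₂ (u n) j := by rw [hurec n]
        _ ≤ Tmap q r qb α ψ₁ ψ₂ (u (n + 1)) j := step
  have hmono' : ∀ j, Monotone fun n => u n j := fun j =>
    monotone_nat_of_le_succ fun n => humono n j
  have hustar_ge : ∀ n j, u n j ≤ ustar j := fun n j =>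
    ge_of_tendsto (hu j) (eventually_atTop.mpr ⟨n, fun m hm => hmono' j hm⟩)
  have hustar0 : ∀ j, 0 ≤ ustar j := fun j => (hu0' 0 j).trans (hustar_ge 0 j)
  have hustar_le : ∀ j, ustar j ≤ ψ₁ j := fun j =>
    le_of_tendsto (hu j) (Filter.Eventually.of_forall fun n => (hbdd n j).2)
  have hustarM : ∀ j, ustar j ≤ M * W j := fun j => (hustar_le j).trans (hψ.ψ₁_le j)
  have hψ₂star : ψ₂ i ≤ ustar i := by
    have := hustar_ge 0 i
    rw [hu0] at this
    exact this
  -- case split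
  simp only [Tmap]
  by_cases hcase : ψ₁ i ≤ ustar i
  · exact le_trans (min_le_right _ _) hcase
  push_neg at hcase
  have hIopn : ∀ n, Iop q r qb α (u n) i ≤ ustar i := by
    intro n
    by_cases h2 : Iop q r qb α (u n) i ≤ ψ₁ i
    · have h3 : Iop q r qb α (u n) i ≤ u (n + 1) i := by
        rw [hurec n]
        simp only [Tmap]
        exact le_min (le_max_left _ _) h2
      exact h3.trans (hustar_ge (n + 1) i)
    · exfalso
      push_neg at h2
      have h3 : u (n + 1) i = ψ₁ i := by
        rw [hurec n]
        simp only [Tmap]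
        exact min_eq_right (le_trans h2.le (le_max_left _ _))
      have h4 := hustar_ge (n + 1) i
      rw [h3] at h4
      linarith
  -- main estimate : Iop ustar i ≤ ustar i
  have hkey : Iop q r qb α ustar i ≤ ustar i := by
    apply le_of_forall_pos_le_add
    intro ε hε
    have hM2 : (0:ℝ) < M + 2 := by linarith
    set ε' := ε / (M + 2) with hε'def
    have hε' : 0 < ε' := div_pos hε hM2
    obtain ⟨CA, hCA0, hCA⟩ := S16.exists_CA hrate hA1 hA2 i
    obtain ⟨m, hm⟩ := S16.tail_small hrate hA1 hA2 i hε'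
    choose Kq hKq using fun j => S16.exists_bound (X := U × V) (hA2.q_cont i j).abs
    have hD : Filter.Tendsto (fun n => ∑ j ∈ Finset.range m, Kq j * (ustar j - u n j))
        atTop (𝓝 0) := by
      have h1 : ∀ j ∈ Finset.range m,
          Filter.Tendsto (fun n => Kq j * (ustar j - u n j)) atTop (𝓝 0) := by
        intro j _
        have h2 : Filter.Tendsto (fun n => ustar j - u n j) atTop (𝓝 0) := by
          simpa using (tendsto_const_nhds (x := ustar j)).sub (hu j)
        simpa using h2.const_mul (Kq j)
      have := tendsto_finset_sum (Finset.range m) h1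
      simpa using this
    have hDi : Filter.Tendsto (fun n => ustar i - u n i) atTop (𝓝 0) := by
      simpa using (tendsto_const_nhds (x := ustar i)).sub (hu i)
    obtain ⟨n, hn1, hn2⟩ :=
      ((hD.eventually (eventually_lt_nhds hε')).and
        (hDi.eventually (eventually_lt_nhds hε'))).exists
    -- the pointwise body estimate
    have hδ0 : ∀ j, 0 ≤ ustar j - u n j := fun j => sub_nonneg.mpr (hustar_ge n j)
    have hδM : ∀ j, ustar j - u n j ≤ M * W j := fun j => by
      have := hu0' n j
      have := hustarM j
      linarith
    have hbody : ∀ (μ : ProbabilityMeasure U) (ν : ProbabilityMeasure V),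
        S16.bodyF q r qb α ustar i μ ν
          ≤ S16.bodyF q r qb α (u n) i μ ν + (M + 2) * ε' := by
      intro μ ν
      have hqb := S16.qb_nonneg hrate i
      set δ : ℕ → ℝ := fun j => ustar j - u n j with hδdef
      have sumPT_star := S16.summable_pTφ hrate hA1 hA2 hψ i μ ν hCA hustar0 hustarM
      have sumPT_un := S16.summable_pTφ hrate hA1 hA2 hψ i μ ν hCA (hu0' n) (huM n)
      have sumQT_δ := S16.summable_qTφ hrate hA1 hA2 hψ i μ ν hCA hδ0 hδM
      have sumQT_abs : Summable fun j => |qT q i j μ ν| * δ j := by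
        refine sumQT_δ.abs.congr fun j => ?_
        rw [abs_mul, abs_of_nonneg (hδ0 j)]
      -- difference of the tsums
      have hT : (∑' j, pT q qb i j μ ν * ustar j) - ∑' j, pT q qb i j μ ν * u n j
          = ∑' j, pT q qb i j μ ν * δ j := by
        rw [← Summable.tsum_sub sumPT_star sumPT_un]
        exact tsum_congr fun j => by simp only [hδdef]; ring
      -- split the δ-tsum
      have hsplit := S16.tsum_pT_split hrate hA1 hA2 hψ i μ ν hCA hδ0 hδM
      -- bound on the qT part
      have hQshift := S16.summable_QbW_of hrate hA1 hA2 i μ ν (fun j => j + m)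
        (S16.pointwise_shift_bound hrate hA1 hA2 i hm)
      have habs1 : ∑' j, qT q i j μ ν * δ j ≤ ∑' j, |qT q i j μ ν| * δ j := by
        refine Summable.tsum_le_tsum (fun j => ?_) sumQT_δ sumQT_abs
        exact mul_le_mul_of_nonneg_right (le_abs_self _) (hδ0 j)
      have hsplit2 : ∑' j, |qT q i j μ ν| * δ j
          = (∑ j ∈ Finset.range m, |qT q i j μ ν| * δ j)
            + ∑' j, |qT q i (j + m) μ ν| * δ (j + m) :=
        (Summable.sum_add_tsum_nat_add m sumQT_abs).symm
      have hfirst : (∑ j ∈ Finset.range m, |qT q i j μ ν| * δ j) ≤ ε' := by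
        refine le_trans (Finset.sum_le_sum fun j _ => ?_) hn1.le
        refine mul_le_mul_of_nonneg_right ?_ (hδ0 j)
        exact le_trans (S16.abs_qT_le hA2 i μ ν j)
          (S16.Qb_le hA2 i μ ν fun a b => hKq j (a, b))
      have hsecond : (∑' j, |qT q i (j + m) μ ν| * δ (j + m)) ≤ M * ε' := by
        have hterm : ∀ j, |qT q i (j + m) μ ν| * δ (j + m)
            ≤ M * (S16.Qb q i (j + m) μ ν * W (j + m)) := by
          intro j
          calc |qT q i (j + m) μ ν| * δ (j + m)
              ≤ S16.Qb q i (j + m) μ ν * (M * W (j + m)) :=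
                mul_le_mul (S16.abs_qT_le hA2 i μ ν (j + m)) (hδM (j + m)) (hδ0 (j + m))
                  (S16.Qb_nonneg hA2 i μ ν (j + m))
            _ = M * (S16.Qb q i (j + m) μ ν * W (j + m)) := by ring
        calc (∑' j, |qT q i (j + m) μ ν| * δ (j + m))
            ≤ ∑' j, M * (S16.Qb q i (j + m) μ ν * W (j + m)) :=
              Summable.tsum_le_tsum hterm ((summable_nat_add_iff m).mpr sumQT_abs)
                (hQshift.1.mul_left M)
          _ = M * ∑' j, S16.Qb q i (j + m) μ ν * W (j + m) := tsum_mul_left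
          _ ≤ M * ε' := mul_le_mul_of_nonneg_left hQshift.2 hM.le
      have hqT_bound : ∑' j, qT q i j μ ν * δ j ≤ ε' + M * ε' := by
        calc ∑' j, qT q i j μ ν * δ j ≤ ∑' j, |qT q i j μ ν| * δ j := habs1
          _ = _ := hsplit2
          _ ≤ ε' + M * ε' := add_le_add hfirst hsecond
      have hdiv : (∑' j, qT q i j μ ν * δ j) / (qb i + 1) ≤ ε' + M * ε' := by
        rcases le_or_gt (∑' j, qT q i j μ ν * δ j) 0 with h | h
        · refine le_trans (div_nonpos_of_nonpos_of_nonneg h (by linarith)) ?_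
          positivity
        · exact le_trans (div_le_self h.le (by linarith)) hqT_bound
      have hpTδ_le : ∑' j, pT q qb i j μ ν * δ j ≤ (M + 2) * ε' := by
        rw [hsplit]
        have : δ i ≤ ε' := hn2.le
        have h0 : (0:ℝ) ≤ ε' := hε'.le
        nlinarith [hdiv]
      have hpTδ_nonneg : 0 ≤ ∑' j, pT q qb i j μ ν * δ j :=
        S16.tsum_pT_nonneg hrate hA1 hA2 hψ i μ ν hCA hδ0 hδM
      have hk0 := S16.k_nonneg hrate hα i
      have hk1 := S16.k_le_one hrate hα i
      have hke : ((qb i + 1) / (α + qb i + 1)) * ∑' j, pT q qb i j μ ν * δ j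
          ≤ (M + 2) * ε' :=
        le_trans (mul_le_of_le_one_left hpTδ_nonneg hk1) hpTδ_le
      have e1 : S16.bodyF q r qb α ustar i μ ν - S16.bodyF q r qb α (u n) i μ ν
          = ((qb i + 1) / (α + qb i + 1)) * ∑' j, pT q qb i j μ ν * δ j := by
        simp only [S16.bodyF]
        rw [← hT]
        ring
      linarith
    have h5 := S16.Iop_add_le hrate hA1 hA2 hψ hα i hCA0 hCA (hu0' n) (huM n)
      hustar0 hustarM hbody
    have h6 : (M + 2) * ε' = ε := by
      rw [hε'def]
      field_simp
    calc Iop q r qb α ustar i ≤ Iop q r qb α (u n) i + (M + 2) * ε' := h5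
      _ ≤ ustar i + ε := by rw [h6]; linarith [hIopn n]
  exact le_trans (min_le_left _ _) (max_le hkey hψ₂star)
end
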